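/- arXiv:2210.15436 — 8 statements merged into one kernel-verified Lean document; each statement's English description precedes it below -/
import Mathlib

section
/- Let C be a free linear code of length n and rank K over a finite chain ring R with p^s elements, and let d^\perp be the minimum distance of its dual. For every \nu with n - d^\perp < \nu \le n, the weight distribution (A_l) of C satisfies \sum_{l=0}^{\nu} \binom{n-l}{\nu-l} A_l = \binom{n}{\nu} p^{s(\nu + K - n)}. -/
open Matrix Finset

/-- The Hamming weight of a vector: number of nonzero entries. -/
noncomputable def wt {R : Type*} [Zero R] {n : ℕ} (v : Fin n → R) : ℕ :=
  Nat.card {i : Fin n // v i ≠ 0}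

/-- Minimum Hamming distance (= minimum weight of a nonzero codeword). -/
noncomputable def minDist {R : Type*} [Zero R] {n : ℕ} (C : Set (Fin n → R)) : ℕ :=
  sInf {w | ∃ c ∈ C, c ≠ 0 ∧ wt c = w}

/-- Dual code w.r.t. the standard inner product. -/
def dualCode {R : Type*} [CommRing R] {n : ℕ} (C : Submodule R (Fin n → R)) :
    Submodule R (Fin n → R) where
  carrier := {v | ∀ c ∈ C, ∑ i, v i * c i = 0}
  add_mem' := by
    intro a b ha hb c hc
    simp only [Set.mem_setOf_eq] at *
    simp [Pi.add_apply, add_mul, Finset.sum_add_distrib, ha c hc, hb c hc]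
  zero_mem' := by
    intro c hc
    simp
  smul_mem' := by
    intro r v hv c hc
    simp only [Set.mem_setOf_eq] at *
    simp [Pi.smul_apply, smul_eq_mul, mul_assoc, ← Finset.mul_sum, hv c hc]

/-- The rank of a code: minimal number of generators. -/
noncomputable def rankCode {R M : Type*} [Ring R] [AddCommGroup M] [Module R M] (C : Submodule R M) : ℕ :=
  sInf {k | ∃ S : Finset M, S.card = k ∧ Submodule.span R (S : Set M) = C}

/-- `H` is a parity-check matrix for `C` : its kernel is exactly `C`. -/
def IsParityCheck {R : Type*} [CommRing R] {m n : ℕ} (H : Matrix (Fin m) (Fin n) R)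
    (C : Submodule R (Fin n → R)) : Prop :=
  ∀ v, v ∈ C ↔ H.mulVec v = 0

/-- A matrix (with rows indexed by `m`, columns by `ι`) has type `(t 0, …, t (s-1))` if exactly
`t i` of its rows are divisible by `γ^i` but not by `γ^(i+1)`. -/
def MatrixType {R : Type*} [CommRing R] {m ι : Type*} (γ : R) (s : ℕ)
    (M : m → ι → R) (t : ℕ → ℕ) : Prop :=
  ∀ i < s, Nat.card {r : m // (∃ u, M r = γ ^ i • u) ∧ ¬ ∃ u, M r = γ ^ (i + 1) • u} = t i

/-- A code has type `(k 0, …, k (s-1))` if it admits a generator matrix (rows span the code,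
no row is a combination of the others) of that row type. -/
def CodeHasType {R : Type*} [CommRing R] {n : ℕ} (γ : R) (s : ℕ)
    (C : Submodule R (Fin n → R)) (k : ℕ → ℕ) : Prop :=
  ∃ G : Matrix (Fin (∑ i ∈ Finset.range s, k i)) (Fin n) R,
    Submodule.span R (Set.range G) = C ∧
    (∀ j, G j ∉ Submodule.span R (Set.range G \ {G j})) ∧
    MatrixType γ s G k

/-- The weight distribution of a code. -/
noncomputable def weightDist {R : Type*} [CommRing R] {n : ℕ} (C : Submodule R (Fin n → R)) (l : ℕ) : ℕ :=
  Nat.card {c : Fin n → R // c ∈ C ∧ wt c = l}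

/-- A ring is a chain ring if its ideals are linearly ordered by inclusion. -/
def IsChainRing (R : Type*) [Ring R] : Prop := ∀ I J : Ideal R, I ≤ J ∨ J ≤ I

/-- `γ` generates the (unique) maximal ideal of `R`. -/
def MaxIdealGen {R : Type*} [CommRing R] (γ : R) : Prop :=
  Ideal.span {γ} ≠ ⊤ ∧ ∀ I : Ideal R, I ≠ ⊤ → I ≤ Ideal.span {γ}


section Aux

lemma socle_exists {R : Type*} [CommRing R] [Fintype R] [Nontrivial R]
    (hR : IsChainRing R) :
    ∃ σ : R, σ ≠ 0 ∧ ∀ y : R, ¬ IsUnit y → σ * y = 0 := by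
  obtain ⟨m, hm⟩ := Ideal.exists_maximal R
  have hmem : ∀ y : R, ¬ IsUnit y → y ∈ m := by
    intro y hy
    have hsp : Ideal.span {y} ≠ ⊤ := by
      simpa [Ideal.span_singleton_eq_top] using hy
    rcases hR (Ideal.span {y}) m with h | h
    · exact h (Ideal.subset_span rfl)
    · rcases hm.eq_of_le hsp h with rfl
      exact Ideal.subset_span rfl
  have hle : m ≤ (⊥ : Ideal R).jacobson := by
    rw [Ideal.jacobson]
    refine le_sInf ?_
    rintro J ⟨-, hJ⟩
    rcases hR m J with h | h
    · exact h
    · exact le_of_eq (hJ.eq_of_le hm.ne_top h).symm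
  have : IsArtinianRing R := isArtinian_of_finite
  obtain ⟨e₀, he₀⟩ := IsArtinianRing.isNilpotent_jacobson_bot (R := R)
  have hnil : m ^ e₀ = ⊥ := by
    refine le_bot_iff.mp ?_
    calc m ^ e₀ ≤ (⊥ : Ideal R).jacobson ^ e₀ := Ideal.pow_right_mono hle e₀
    _ = ⊥ := by rw [he₀]; rfl
  have hex : ∃ e, m ^ e = ⊥ := ⟨e₀, hnil⟩
  classical
  set e := Nat.find hex with hedef
  have he : m ^ e = ⊥ := Nat.find_spec hex
  have hepos : 0 < e := by
    rcases Nat.eq_zero_or_pos e with h0 | h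
    · exfalso
      rw [h0, pow_zero, Ideal.one_eq_top] at he
      have h1 : (1 : R) ∈ (⊥ : Ideal R) := he ▸ (Submodule.mem_top : (1:R) ∈ (⊤ : Ideal R))
      exact one_ne_zero (Submodule.mem_bot R |>.mp h1)
    · exact h
  have hne : m ^ (e - 1) ≠ ⊥ := Nat.find_min hex (by omega)
  obtain ⟨σ, hσm, hσ⟩ := Submodule.exists_mem_ne_zero_of_ne_bot hne
  refine ⟨σ, hσ, fun y hy => ?_⟩
  have : σ * y ∈ m ^ (e - 1) * m := Ideal.mul_mem_mul hσm (hmem y hy)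
  rw [← pow_succ, Nat.sub_add_cancel hepos, he] at this
  exact this


lemma key_fin {R : Type*} [CommRing R]
    (σ : R) (hσ : σ ≠ 0) (hann : ∀ y : R, ¬ IsUnit y → σ * y = 0) :
    ∀ (m : ℕ) (M : Submodule R (Fin m → R)), M ≠ ⊤ →
      ∃ x : Fin m → R, x ≠ 0 ∧ ∀ y ∈ M, ∑ i, x i * y i = 0 := by
  intro m
  induction m with
  | zero =>
      intro M hM
      exact absurd (Submodule.eq_top_iff'.mpr fun v => by
        have : v = 0 := funext fun i => i.elim0
        rw [this]; exact M.zero_mem) hM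
  | succ m ih =>
      intro M hM
      -- projection to last coordinate
      by_cases hproj : ∀ g ∈ M, ¬ IsUnit (g (Fin.last m))
      · -- Case A: last coordinate of M always non-unit
        refine ⟨fun i => if i = Fin.last m then σ else 0, ?_, ?_⟩
        · intro h
          have := congrFun h (Fin.last m)
          simp at this
          exact hσ this
        · intro y hy
          rw [Fin.sum_univ_castSucc]
          have h1 : ∀ i : Fin m, (if (i.castSucc : Fin (m+1)) = Fin.last m then σ else 0) * y i.castSucc = 0 := by
            intro i
            rw [if_neg (Fin.castSucc_lt_last i).ne]
            ring
          rw [Finset.sum_congr rfl fun i _ => h1 i]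
          simp [hann _ (hproj y hy)]
      · push_neg at hproj
        obtain ⟨g, hgM, hgu⟩ := hproj
        obtain ⟨u, hu⟩ := hgu.exists_left_inv
        -- replace g by u • g so last coord is 1
        set g' : Fin (m+1) → R := u • g with hg'
        have hg'M : g' ∈ M := M.smul_mem u hgM
        have hg'last : g' (Fin.last m) = 1 := by simp [hg', hu]
        -- M₀' : init of elements of M with last coordinate 0
        let π : (Fin (m+1) → R) →ₗ[R] (Fin m → R) := LinearMap.funLeft R R Fin.castSucc
        let M₀ : Submodule R (Fin m → R) :=
          Submodule.map π (M ⊓ LinearMap.ker (LinearMap.proj (Fin.last m)))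
        have hM₀ : M₀ ≠ ⊤ := by
          intro htop
          apply hM
          rw [Submodule.eq_top_iff']
          intro v
          have hv : (fun i => v i.castSucc) - (fun i => (v (Fin.last m)) * g' i.castSucc) ∈ M₀ := htop ▸ Submodule.mem_top
          obtain ⟨w, ⟨hwM, hwk⟩, hw⟩ := hv
          have hwlast : w (Fin.last m) = 0 := hwk
          have hveq : v = w + (v (Fin.last m)) • g' := by
            funext i
            refine Fin.lastCases ?_ (fun j => ?_) i
            · simp [hwlast, hg'last]
            · have := congrFun hw j
              simp only [π, LinearMap.funLeft_apply, Pi.sub_apply] at this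
              simp only [Pi.add_apply, Pi.smul_apply, smul_eq_mul]
              linear_combination -this
          rw [hveq]
          exact M.add_mem hwM (M.smul_mem _ hg'M)
        obtain ⟨x', hx', hx'ann⟩ := ih M₀ hM₀
        refine ⟨Fin.snoc x' (-(∑ i, x' i * g' i.castSucc)), ?_, ?_⟩
        · intro h
          apply hx'
          funext i
          have := congrFun h i.castSucc
          simpa using this
        · intro y hy
          set c : R := -(∑ i, x' i * g' i.castSucc)
          set x : Fin (m+1) → R := Fin.snoc x' c with hx
          have hxg : ∑ i, x i * g' i = 0 := by
            rw [Fin.sum_univ_castSucc]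
            simp only [hx, Fin.snoc_castSucc, Fin.snoc_last, hg'last, mul_one, c]
            ring
          -- y - y_last • g' ∈ M with last coord 0
          set t : R := y (Fin.last m)
          have hz : y - t • g' ∈ M := M.sub_mem hy (M.smul_mem t hg'M)
          have hzlast : (y - t • g') (Fin.last m) = 0 := by
            simp [hg'last, t]
          have hzM₀ : π (y - t • g') ∈ M₀ := Submodule.mem_map_of_mem ⟨hz, hzlast⟩
          have h0 : ∑ i, x' i * (y - t • g') i.castSucc = 0 := hx'ann _ hzM₀
          have hsplit : ∑ i, x i * y i = ∑ i, x i * (y - t • g') i + t * ∑ i, x i * g' i := by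
            rw [Finset.mul_sum, ← Finset.sum_add_distrib]
            refine Finset.sum_congr rfl fun i _ => ?_
            simp only [Pi.sub_apply, Pi.smul_apply, smul_eq_mul]
            ring
          rw [hsplit, hxg, mul_zero, add_zero]
          rw [Fin.sum_univ_castSucc]
          simp only [hx, Fin.snoc_castSucc, Fin.snoc_last]
          rw [hzlast, mul_zero, add_zero]
          exact h0

lemma key_gen {R : Type*} [CommRing R]
    (σ : R) (hσ : σ ≠ 0) (hann : ∀ y : R, ¬ IsUnit y → σ * y = 0)
    (ι : Type*) [Fintype ι] (M : Submodule R (ι → R)) (hM : M ≠ ⊤) :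
    ∃ x : ι → R, x ≠ 0 ∧ ∀ y ∈ M, ∑ i, x i * y i = 0 := by
  classical
  set c := Fintype.card ι
  set e : Fin c ≃ ι := (Fintype.equivFin ι).symm with he
  set E : (ι → R) ≃ₗ[R] (Fin c → R) := LinearEquiv.funCongrLeft R R e with hE
  set M' : Submodule R (Fin c → R) := Submodule.map (E : (ι → R) →ₗ[R] (Fin c → R)) M with hM'
  have hM'top : M' ≠ ⊤ := by
    intro htop
    apply hM
    rw [Submodule.eq_top_iff']
    intro v
    have : E v ∈ M' := htop ▸ Submodule.mem_top
    obtain ⟨w, hwM, hw⟩ := this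
    have : w = v := E.injective hw
    exact this ▸ hwM
  obtain ⟨x, hx, hxann⟩ := key_fin σ hσ hann c M' hM'top
  refine ⟨x ∘ e.symm, ?_, ?_⟩
  · intro h
    apply hx
    funext i
    have := congrFun h (e i)
    simpa using this
  · intro y hy
    have h1 : ∀ i : Fin c, (E y) i = y (e i) := fun i => rfl
    have h2 := hxann (E y) (Submodule.mem_map_of_mem hy)
    calc ∑ j, (x ∘ e.symm) j * y j = ∑ i, (x ∘ e.symm) (e i) * y (e i) :=
          (Equiv.sum_comp e _).symm
      _ = 0 := by simpa [h1] using h2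

open Finset in
lemma count_supersets {ι : Type*} [Fintype ι] [DecidableEq ι] (s : Finset ι) (ν : ℕ)
    (hs : s.card ≤ ν) :
    (((univ : Finset ι).powersetCard ν).filter (fun T => s ⊆ T)).card
      = (Fintype.card ι - s.card).choose (ν - s.card) := by
  rw [← Finset.card_compl s, ← Finset.card_powersetCard]
  refine Finset.card_bij (fun T _ => T \ s) ?_ ?_ ?_
  · intro T hT
    simp only [Finset.mem_filter, Finset.mem_powersetCard] at hT
    obtain ⟨⟨-, hcard⟩, hsub⟩ := hT
    rw [Finset.mem_powersetCard]
    constructor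
    · intro x hx
      simp only [Finset.mem_sdiff] at hx
      simp [Finset.mem_compl, hx.2]
    · rw [Finset.card_sdiff_of_subset hsub, hcard]
  · intro T1 h1 T2 h2 heq
    simp only [Finset.mem_filter, Finset.mem_powersetCard] at h1 h2
    have e1 : T1 \ s ∪ s = T1 := Finset.sdiff_union_of_subset h1.2
    have e2 : T2 \ s ∪ s = T2 := Finset.sdiff_union_of_subset h2.2
    rw [← e1, ← e2, heq]
  · intro U hU
    rw [Finset.mem_powersetCard] at hU
    obtain ⟨hUsub, hUcard⟩ := hU
    have hdisj : Disjoint U s := by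
      refine Finset.disjoint_left.mpr ?_
      intro a ha has
      exact (Finset.mem_compl.mp (hUsub ha)) has
    refine ⟨U ∪ s, ?_, ?_⟩
    · simp only [Finset.mem_filter, Finset.mem_powersetCard]
      refine ⟨⟨Finset.subset_univ _, ?_⟩, Finset.subset_union_right⟩
      rw [Finset.card_union_of_disjoint hdisj, hUcard]
      omega
    · rw [Finset.union_sdiff_cancel_right hdisj]

open Finset Classical in
lemma per_T_count {R : Type*} [CommRing R] [Fintype R]
    (σ : R) (hσ : σ ≠ 0) (hann : ∀ y : R, ¬ IsUnit y → σ * y = 0)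
    {n : ℕ} (C : Submodule R (Fin n → R)) (T : Finset (Fin n))
    (hlt : n - T.card < minDist (dualCode C : Set (Fin n → R))) :
    (univ.filter (fun c : Fin n → R => c ∈ C ∧ ∀ i ∉ T, c i = 0)).card
      * Nat.card R ^ (n - T.card) = Nat.card C := by
  classical
  set ι := {i : Fin n // i ∉ T} with hι
  have hcardι : Fintype.card ι = n - T.card := by
    simp [hι, Fintype.card_subtype_compl, Fintype.card_coe]
  set f : C →ₗ[R] (ι → R) := (LinearMap.funLeft R R Subtype.val).comp C.subtype with hf
  -- surjectivity
  have hsurj : Function.Surjective f := by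
    rw [← LinearMap.range_eq_top]
    by_contra hne
    obtain ⟨x, hx, hxann⟩ := key_gen σ hσ hann ι (LinearMap.range f) hne
    set x' : Fin n → R := fun i => if h : i ∉ T then x ⟨i, h⟩ else 0 with hx'
    have hx'dual : x' ∈ dualCode C := by
      intro c hc
      have hfc : f ⟨c, hc⟩ ∈ LinearMap.range f := LinearMap.mem_range_self f _
      have h0 := hxann _ hfc
      have hsum : ∑ i, x' i * c i = ∑ i : ι, x' i.val * c i.val := by
        rw [← Finset.sum_subtype (univ.filter (fun i => i ∉ T))
          (by intro i; simp [hι]) (fun i => x' i * c i)]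
        refine (Finset.sum_filter_of_ne ?_).symm
        intro i _ hne'
        by_contra hiT
        apply hne'
        simp [hx', hiT]
      rw [hsum]
      convert h0 using 1
      refine Finset.sum_congr rfl fun i _ => ?_
      simp [hx', i.prop, hf]
    have hx'ne : x' ≠ 0 := by
      obtain ⟨j, hj⟩ := Function.ne_iff.mp hx
      intro h
      apply hj
      have := congrFun h j.val
      simpa [hx', j.prop] using this
    have hwt : wt x' ≤ n - T.card := by
      rw [wt, Nat.card_eq_fintype_card, ← hcardι]
      exact Fintype.card_subtype_mono _ _ (fun i hi => by
        by_contra hiT; exact hi (by simp [hx', hiT]))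
    have hmem : wt x' ∈ {w | ∃ c ∈ (dualCode C : Set (Fin n → R)), c ≠ 0 ∧ wt c = w} :=
      ⟨x', hx'dual, hx'ne, rfl⟩
    have := Nat.sInf_le hmem
    rw [minDist] at hlt
    omega
  -- counting
  set f' := f.toAddMonoidHom with hf'
  have h1 : Nat.card C = Nat.card (C ⧸ f'.ker) * Nat.card f'.ker :=
    AddSubgroup.card_eq_card_quotient_mul_card_addSubgroup f'.ker
  have h2 : Nat.card (C ⧸ f'.ker) = Nat.card (ι → R) := by
    rw [Nat.card_congr (QuotientAddGroup.quotientKerEquivRange f').toEquiv]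
    have : f'.range = ⊤ := AddMonoidHom.range_eq_top_of_surjective f' hsurj
    rw [this]
    exact (Nat.card_congr (Equiv.Set.univ _))
  have h3 : Nat.card (ι → R) = Nat.card R ^ (n - T.card) := by
    rw [Nat.card_eq_fintype_card, Nat.card_eq_fintype_card, ← hcardι]
    exact Fintype.card_fun
  have h4 : (univ.filter (fun c : Fin n → R => c ∈ C ∧ ∀ i ∉ T, c i = 0)).card
      = Nat.card f'.ker := by
    rw [← Fintype.card_subtype]
    rw [Nat.card_eq_fintype_card]
    refine Fintype.card_congr ?_
    refine ⟨fun c => ⟨⟨c.1, c.2.1⟩, ?_⟩, fun k => ⟨k.1.1, k.1.2, fun i hi => ?_⟩, ?_, ?_⟩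
    · rw [AddMonoidHom.mem_ker]
      funext i
      exact c.2.2 i.val i.prop
    · have hk := AddMonoidHom.mem_ker.mp k.2
      exact congrFun hk ⟨i, hi⟩
    · intro c; rfl
    · intro k; rfl
  rw [h4, h1, h2, h3, mul_comm]

end Aux

theorem stmt_7 {R : Type*} [CommRing R] [Fintype R] (hR : IsChainRing R)
    (p s : ℕ) (hcard : Nat.card R = p ^ s)
    {n K : ℕ} (C : Submodule R (Fin n → R)) (hfree : Nonempty (C ≃ₗ[R] (Fin K → R)))
    (ν : ℕ) (hν1 : n - minDist (dualCode C : Set (Fin n → R)) < ν) (hν2 : ν ≤ n) :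
    ((∑ l ∈ Finset.range (ν + 1), (n - l).choose (ν - l) * weightDist C l : ℕ) : ℚ)
      = (n.choose ν : ℚ) * (p : ℚ) ^ ((s * ν + s * K : ℤ) - s * n) := by
  classical
  rcases subsingleton_or_nontrivial R with hsub | hnt
  · -- trivial ring: contradiction with hν1, hν2
    exfalso
    have hd : minDist (dualCode C : Set (Fin n → R)) = 0 := by
      rw [minDist]
      convert Nat.sInf_empty
      rw [Set.eq_empty_iff_forall_notMem]
      rintro w ⟨c, -, hc, -⟩
      exact hc (Subsingleton.elim _ _)
    rw [hd] at hν1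
    omega
  obtain ⟨σ, hσ, hann⟩ := socle_exists hR
  -- basic cardinalities
  have hp2 : 2 ≤ p := by
    have h1 : 1 < Nat.card R := by
      rw [Nat.card_eq_fintype_card]
      exact Fintype.one_lt_card
    rw [hcard] at h1
    by_contra hp
    push_neg at hp
    have : p ^ s ≤ 1 ^ s := Nat.pow_le_pow_left (by omega) s
    simp at this
    omega
  have hCcard : Nat.card C = p ^ (s * K) := by
    rw [Nat.card_congr hfree.some.toEquiv, Nat.card_eq_fintype_card, Fintype.card_fun]
    rw [← Nat.card_eq_fintype_card, hcard, Fintype.card_fin, ← pow_mul]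
  -- finset versions
  set Ca : Finset (Fin n → R) := Finset.univ.filter (· ∈ C) with hCa
  have hwd : ∀ l, weightDist C l = (Ca.filter (fun c => wt c = l)).card := by
    intro l
    rw [weightDist, Nat.card_eq_fintype_card, Fintype.card_subtype, hCa,
      Finset.filter_filter]
  have hwtcard : ∀ c : Fin n → R, wt c = (Finset.univ.filter (fun i => c i ≠ 0)).card := by
    intro c
    rw [wt, Nat.card_eq_fintype_card, Fintype.card_subtype]
  -- the double counting identity over ℕ
  have step1 : ∀ T : Finset (Fin n),
      (Finset.univ.filter (fun c : Fin n → R => c ∈ C ∧ ∀ i ∉ T, c i = 0)).card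
        = (Ca.filter (fun c => ∀ i ∉ T, c i = 0)).card := by
    intro T
    rw [hCa, Finset.filter_filter]
  have hcount : ∀ c : Fin n → R,
      (((Finset.univ : Finset (Fin n)).powersetCard ν).filter
          (fun T => ∀ i ∉ T, c i = 0)).card
        = if wt c ≤ ν then (n - wt c).choose (ν - wt c) else 0 := by
    intro c
    set sc : Finset (Fin n) := Finset.univ.filter (fun i => c i ≠ 0) with hsc
    have hcond : ∀ T : Finset (Fin n), (∀ i ∉ T, c i = 0) ↔ sc ⊆ T := by
      intro T
      constructor
      · intro h i hi
        rw [hsc, Finset.mem_filter] at hi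
        by_contra hiT
        exact hi.2 (h i hiT)
      · intro h i hiT
        by_contra hci
        exact hiT (h (by rw [hsc, Finset.mem_filter]; exact ⟨Finset.mem_univ i, hci⟩))
    rw [Finset.filter_congr (fun T _ => hcond T)]
    by_cases hwc : wt c ≤ ν
    · rw [if_pos hwc]
      have hle : sc.card ≤ ν := by rw [← hwtcard c]; exact hwc
      rw [count_supersets sc ν hle, Fintype.card_fin, ← hwtcard c]
    · rw [if_neg hwc]
      rw [Finset.card_eq_zero, Finset.eq_empty_iff_forall_notMem]
      intro T hT
      rw [Finset.mem_filter, Finset.mem_powersetCard] at hT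
      obtain ⟨⟨-, hTcard⟩, hsub⟩ := hT
      have := Finset.card_le_card hsub
      rw [hTcard, ← hwtcard c] at this
      omega
  have hmid : ∑ l ∈ Finset.range (ν + 1), (n - l).choose (ν - l) * weightDist C l
      = ∑ T ∈ (Finset.univ : Finset (Fin n)).powersetCard ν,
          (Finset.univ.filter (fun c : Fin n → R => c ∈ C ∧ ∀ i ∉ T, c i = 0)).card := by
    calc ∑ l ∈ Finset.range (ν + 1), (n - l).choose (ν - l) * weightDist C l
        = ∑ l ∈ Finset.range (ν + 1),
            ∑ c ∈ Ca.filter (fun c => wt c = l), (n - wt c).choose (ν - wt c) := by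
          refine Finset.sum_congr rfl fun l hl => ?_
          have heach : ∑ c ∈ Ca.filter (fun c => wt c = l), (n - wt c).choose (ν - wt c)
              = ∑ _c ∈ Ca.filter (fun c => wt c = l), (n - l).choose (ν - l) :=
            Finset.sum_congr rfl fun c hc => by rw [(Finset.mem_filter.mp hc).2]
          rw [heach, Finset.sum_const, smul_eq_mul, hwd l, mul_comm]
      _ = ∑ l ∈ Finset.range (ν + 1),
            ∑ c ∈ (Ca.filter (fun c => wt c ≤ ν)).filter (fun c => wt c = l),
              (n - wt c).choose (ν - wt c) := by
          refine Finset.sum_congr rfl fun l hl => ?_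
          rw [Finset.mem_range] at hl
          have hfib : (Ca.filter (fun c => wt c ≤ ν)).filter (fun c => wt c = l)
              = Ca.filter (fun c => wt c = l) := by
            rw [Finset.filter_filter]
            refine Finset.filter_congr fun c _ => ?_
            constructor
            · exact fun h => h.2
            · exact fun h => ⟨by omega, h⟩
          rw [hfib]
      _ = ∑ c ∈ Ca.filter (fun c => wt c ≤ ν), (n - wt c).choose (ν - wt c) :=
          Finset.sum_fiberwise_of_maps_to (fun c hc => by
            rw [Finset.mem_filter] at hc
            rw [Finset.mem_range]
            omega) _
      _ = ∑ c ∈ Ca, if wt c ≤ ν then (n - wt c).choose (ν - wt c) else 0 :=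
          Finset.sum_filter _ _
      _ = ∑ c ∈ Ca, (((Finset.univ : Finset (Fin n)).powersetCard ν).filter
            (fun T => ∀ i ∉ T, c i = 0)).card :=
          Finset.sum_congr rfl fun c _ => (hcount c).symm
      _ = ∑ T ∈ (Finset.univ : Finset (Fin n)).powersetCard ν,
            (Ca.filter (fun c => ∀ i ∉ T, c i = 0)).card := by
          simp only [Finset.card_filter]
          exact Finset.sum_comm
      _ = ∑ T ∈ (Finset.univ : Finset (Fin n)).powersetCard ν,
            (Finset.univ.filter (fun c : Fin n → R => c ∈ C ∧ ∀ i ∉ T, c i = 0)).card :=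
          Finset.sum_congr rfl fun T _ => (step1 T).symm
  -- now evaluate the right-hand side using per_T_count
  have hdlt : ∀ T ∈ (Finset.univ : Finset (Fin n)).powersetCard ν,
      (Finset.univ.filter (fun c : Fin n → R => c ∈ C ∧ ∀ i ∉ T, c i = 0)).card
        * p ^ (s * (n - ν)) = p ^ (s * K) := by
    intro T hT
    have hTc : T.card = ν := (Finset.mem_powersetCard.mp hT).2
    have hlt : n - T.card < minDist (dualCode C : Set (Fin n → R)) := by
      rw [hTc]
      clear * - hν1 hν2
      omega
    have := per_T_count σ hσ hann C T hlt
    rw [hcard, ← pow_mul, hTc] at this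
    rw [this, hCcard]
  -- cast to ℚ
  have hpQ : (p : ℚ) ≠ 0 := by positivity
  have hne : ((p : ℚ) ^ (s * (n - ν)) : ℚ) ≠ 0 := by positivity
  have hE : (p : ℚ) ^ ((s * ν + s * K : ℤ) - s * n) * (p : ℚ) ^ (s * (n - ν))
      = (p : ℚ) ^ (s * K) := by
    rw [← zpow_natCast (p : ℚ) (s * (n - ν)), ← zpow_add₀ hpQ,
      ← zpow_natCast (p : ℚ) (s * K)]
    congr 1
    push_cast [Nat.cast_sub hν2]
    ring
  have h3 : ∀ T ∈ (Finset.univ : Finset (Fin n)).powersetCard ν,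
      (((Finset.univ.filter (fun c : Fin n → R => c ∈ C ∧ ∀ i ∉ T, c i = 0)).card : ℕ) : ℚ)
        = (p : ℚ) ^ ((s * ν + s * K : ℤ) - s * n) := by
    intro T hT
    have h := hdlt T hT
    have h2 : ((Finset.univ.filter (fun c : Fin n → R => c ∈ C ∧ ∀ i ∉ T, c i = 0)).card : ℚ)
        * (p : ℚ) ^ (s * (n - ν)) = (p : ℚ) ^ (s * K) := by
      exact_mod_cast congrArg (Nat.cast : ℕ → ℚ) h
    refine mul_right_cancel₀ hne ?_
    rw [h2, hE]
  rw [hmid]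
  calc ((∑ T ∈ (Finset.univ : Finset (Fin n)).powersetCard ν,
          (Finset.univ.filter (fun c : Fin n → R => c ∈ C ∧ ∀ i ∉ T, c i = 0)).card : ℕ) : ℚ)
      = ∑ T ∈ (Finset.univ : Finset (Fin n)).powersetCard ν,
          (((Finset.univ.filter (fun c : Fin n → R => c ∈ C ∧ ∀ i ∉ T, c i = 0)).card : ℕ) : ℚ) := by
        push_cast
        rfl
    _ = ∑ _T ∈ (Finset.univ : Finset (Fin n)).powersetCard ν,
          (p : ℚ) ^ ((s * ν + s * K : ℤ) - s * n) :=
        Finset.sum_congr rfl h3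
    _ = (n.choose ν : ℚ) * (p : ℚ) ^ ((s * ν + s * K : ℤ) - s * n) := by
        rw [Finset.sum_const, Finset.card_powersetCard, Finset.card_univ, Fintype.card_fin,
          nsmul_eq_mul]
end

section
/- Let C be a linear code of length n over a finite chain ring, with dual minimum distance d^\perp, and let H be a parity-check matrix in standard form for a code of type (k_0,...,k_{s-1}) and rank K. For n - d^\perp < \nu \le n, the number of (n-k_0) \times \nu submatrices of H of type (t_0, t_1, ..., t_{s-1}) equals \binom{n}{\nu} if (t_0,...,t_{s-1}) = (n-K, k_{s-1}, ..., k_1) and 0 otherwise. -/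
open Matrix Finset

open Classical in
lemma key_div {R : Type*} [CommRing R] (γ : R) (s : ℕ) (hmax : MaxIdealGen γ)
    (hnil : γ ^ s = 0) (hnil' : γ ^ (s-1) ≠ 0) (i : ℕ) (hi : i ≤ s)
    (x : R) (hx : γ ^ (s - i) * x = 0) : γ ^ i ∣ x := by
  rcases eq_or_ne x 0 with rfl | hx0
  · exact dvd_zero _
  have hPs : ¬ γ ^ s ∣ x := by
    rw [hnil, zero_dvd_iff]; exact hx0
  set j := Nat.findGreatest (fun j => γ ^ j ∣ x) s with hj
  have hspec : γ ^ j ∣ x := Nat.findGreatest_spec (P := fun j => γ ^ j ∣ x) (Nat.zero_le s) (show γ ^ 0 ∣ x by simpa using one_dvd x)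
  have hjle : j ≤ s := Nat.findGreatest_le s
  have hjlt : j < s := lt_of_le_of_ne hjle (fun h => hPs (h ▸ hspec))
  have hnot : ¬ γ ^ (j+1) ∣ x := Nat.findGreatest_is_greatest (Nat.lt_succ_self j) hjlt
  obtain ⟨u, hu⟩ := hspec
  have hunit : IsUnit u := by
    by_contra hnu
    have : Ideal.span {u} ≠ ⊤ := by
      simp [Ideal.span_singleton_eq_top, hnu]
    have hmem : u ∈ Ideal.span {γ} := hmax.2 _ this (Ideal.mem_span_singleton_self u)
    obtain ⟨v, hv⟩ := Ideal.mem_span_singleton.mp hmem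
    exact hnot ⟨v, by rw [hu, hv]; ring⟩
  have h0 : γ ^ (s - i + j) * u = 0 := by
    calc γ ^ (s - i + j) * u = γ ^ (s-i) * (γ^j * u) := by rw [pow_add]; ring
    _ = γ ^ (s-i) * x := by rw [hu]
    _ = 0 := hx
  have h1 : γ ^ (s - i + j) = 0 := by
    obtain ⟨w, hw⟩ := hunit.exists_right_inv
    have := congrArg (· * w) h0
    simpa [mul_assoc, hw] using this
  have hge : s ≤ s - i + j := by
    by_contra hlt
    push_neg at hlt
    apply hnil'
    calc γ ^ (s-1) = γ ^ (s - i + j) * γ ^ (s - 1 - (s - i + j)) := by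
          rw [← pow_add]; congr 1; omega
    _ = 0 := by rw [h1, zero_mul]
  exact dvd_trans (pow_dvd_pow γ (by omega)) ⟨u, hu⟩

open Classical in
theorem stmt_8 {R : Type*} [CommRing R] [Fintype R] (hR : IsChainRing R)
    (γ : R) (s p : ℕ) (hmax : MaxIdealGen γ) (hnil : γ ^ s = 0) (hnil' : γ ^ (s - 1) ≠ 0)
    (hp : Nat.card (R ⧸ Ideal.span {γ}) = p) (hs : 0 < s)
    {n : ℕ} (C : Submodule R (Fin n → R)) (k : ℕ → ℕ) (htype : CodeHasType γ s C k)
    (K : ℕ) (hK : K = ∑ i ∈ Finset.range s, k i)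
    (H : Matrix (Fin (n - k 0)) (Fin n) R) (hH : IsParityCheck H C)
    (hHtype : MatrixType γ s H (fun i => if i = 0 then n - K else k (s - i)))
    (ν : ℕ) (hν1 : n - minDist (dualCode C : Set (Fin n → R)) < ν) (hν2 : ν ≤ n)
    (t : ℕ → ℕ) :
    Nat.card {I : Finset (Fin n) // I.card = ν ∧
        MatrixType γ s (fun (r : Fin (n - k 0)) (j : {x : Fin n // x ∈ I}) => H r j.1) t}
      = if (t 0 = n - K ∧ ∀ i, 1 ≤ i → i < s → t i = k (s - i)) then n.choose ν else 0 := by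
  set d := minDist (dualCode C : Set (Fin n → R)) with hd
  have hrow : ∀ r, H r ∈ dualCode C := by
    intro r c hc
    have := (hH c).mp hc
    simpa [Matrix.mulVec, dotProduct] using congrFun this r
  have hQP : ∀ (I : Finset (Fin n)), I.card = ν → ∀ (r : Fin (n - k 0)) (i : ℕ), i ≤ s →
      ((∃ u : {x : Fin n // x ∈ I} → R,
          (fun j : {x : Fin n // x ∈ I} => H r j.1) = γ ^ i • u)
        ↔ (∃ u : Fin n → R, H r = γ ^ i • u)) := by
    intro I hI r i hi
    constructor
    · rintro ⟨u, hu⟩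
      rcases Nat.eq_zero_or_pos i with rfl | hipos
      · exact ⟨H r, by simp⟩
      have hdiv : ∀ j ∈ I, γ ^ i ∣ H r j := by
        intro j hj
        refine ⟨u ⟨j, hj⟩, ?_⟩
        have := congrFun hu ⟨j, hj⟩
        simpa using this
      set c : Fin n → R := γ ^ (s - i) • H r with hc
      have hcd : c ∈ dualCode C := Submodule.smul_mem _ _ (hrow r)
      have hczero : ∀ j ∈ I, c j = 0 := by
        intro j hj
        obtain ⟨v, hv⟩ := hdiv j hj
        show γ ^ (s - i) * H r j = 0
        rw [hv]
        calc γ ^ (s-i) * (γ ^ i * v) = γ ^ (s - i + i) * v := by rw [pow_add]; ring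
        _ = 0 := by rw [show s - i + i = s by omega, hnil, zero_mul]
      have hc0 : c = 0 := by
        by_contra hne
        have hwt : wt c ≤ n - ν := by
          have hsub : (Finset.univ.filter fun j => c j ≠ 0) ⊆ Iᶜ := by
            intro j hj
            simp only [Finset.mem_filter] at hj
            simp only [Finset.mem_compl]
            intro hjI; exact hj.2 (hczero j hjI)
          have hcard := Finset.card_le_card hsub
          rw [Finset.card_compl, hI] at hcard
          calc wt c = (Finset.univ.filter fun j => c j ≠ 0).card := by
                rw [wt, Nat.card_eq_fintype_card, Fintype.card_subtype]
          _ ≤ _ := by simpa using hcard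
        have hmin : d ≤ wt c := Nat.sInf_le ⟨c, hcd, hne, rfl⟩
        omega
      have hz : ∀ j, γ ^ (s - i) * H r j = 0 := by
        intro j
        have := congrFun hc0 j
        simpa [hc] using this
      refine ⟨fun j => Classical.choose (key_div γ s hmax hnil hnil' i hi _ (hz j)), ?_⟩
      funext j
      simpa using Classical.choose_spec (key_div γ s hmax hnil hnil' i hi _ (hz j))
    · rintro ⟨u, hu⟩
      exact ⟨fun j => u j.1, by funext j; simp [hu]⟩
  have hchar : ∀ (I : Finset (Fin n)), I.card = ν →
      (MatrixType γ s (fun (r : Fin (n - k 0)) (j : {x : Fin n // x ∈ I}) => H r j.1) t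
        ↔ ∀ i < s, t i = if i = 0 then n - K else k (s - i)) := by
    intro I hI
    have hcount : ∀ i, i < s →
        Nat.card {r : Fin (n - k 0) //
          (∃ u, (fun j : {x : Fin n // x ∈ I} => H r j.1) = γ ^ i • u) ∧
          ¬ ∃ u, (fun j : {x : Fin n // x ∈ I} => H r j.1) = γ ^ (i+1) • u}
        = if i = 0 then n - K else k (s - i) := by
      intro i hi
      have h := hHtype i hi
      simp only at h
      rw [← h]
      apply Nat.card_congr
      apply Equiv.subtypeEquivRight
      intro r
      rw [hQP I hI r i (le_of_lt hi), hQP I hI r (i+1) hi]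
    constructor
    · intro hM i hi
      exact (hM i hi).symm.trans (hcount i hi)
    · intro ht i hi
      exact (hcount i hi).trans (ht i hi).symm
  split_ifs with hcond
  · obtain ⟨h0, hrest⟩ := hcond
    have hiff : ∀ I : Finset (Fin n), (I.card = ν ∧
        MatrixType γ s (fun (r : Fin (n - k 0)) (j : {x : Fin n // x ∈ I}) => H r j.1) t)
        ↔ I.card = ν := by
      intro I
      constructor
      · exact And.left
      · intro hI
        refine ⟨hI, (hchar I hI).mpr ?_⟩
        intro i hi
        rcases Nat.eq_zero_or_pos i with rfl | h1
        · simpa using h0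
        · rw [if_neg (by omega)]
          exact hrest i h1 hi
    rw [Nat.card_congr (Equiv.subtypeEquivRight hiff), Nat.card_eq_fintype_card,
      Fintype.card_finset_len]
    simp
  · have hempty : IsEmpty {I : Finset (Fin n) // I.card = ν ∧
        MatrixType γ s (fun (r : Fin (n - k 0)) (j : {x : Fin n // x ∈ I}) => H r j.1) t} := by
      constructor
      rintro ⟨I, hI, hM⟩
      apply hcond
      have hall := (hchar I hI).mp hM
      constructor
      · simpa using hall 0 hs
      · intro i h1 hi
        have := hall i hi
        rwa [if_neg (by omega)] at this
    simp [Nat.card_of_isEmpty]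
end

section
/- Let H be a parity-check matrix in standard form for a linear code C of type (k_0,...,k_{s-1}) over a finite chain ring R, so that H is a generator matrix for C^\perp. A message v \in R^{n-k_0} satisfies v H = 0 if and only if v has the block form v = (0,...,0 | \gamma^{s-1} v_1 | \gamma^{s-2} v_2 | ... | \gamma v_{s-1}), where the zero block has length n - K and the block multiplied by \gamma^{s-j} has length k_{s-j}. -/
open Matrix Finset

lemma ann_lemma {R : Type*} [CommRing R] {γ : R} {s : ℕ}
    (hmax : MaxIdealGen γ) (hnil : γ ^ s = 0) (hnil' : γ ^ (s - 1) ≠ 0)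
    {x : R} {t : ℕ} (ht : t ≤ s) (hx : x * γ ^ t = 0) :
    ∃ w, x = γ ^ (s - t) * w := by
  classical
  by_cases h0 : x = 0
  · exact ⟨0, by simp [h0]⟩
  set P : ℕ → Prop := fun j => ∃ a, x = γ ^ j * a with hP
  have hP0 : P 0 := ⟨x, by simp⟩
  set j := Nat.findGreatest P s with hj
  obtain ⟨a, ha⟩ : P j := Nat.findGreatest_spec (Nat.zero_le s) hP0
  have hjs : j ≤ s := Nat.findGreatest_le s
  have hjlt : j < s := by
    rcases lt_or_eq_of_le hjs with h | h
    · exact h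
    · exact absurd (by rw [ha, h, hnil, zero_mul]) h0
  have haunit : IsUnit a := by
    by_contra hau
    have hspan : Ideal.span {a} ≠ ⊤ := fun htop => hau (Ideal.span_singleton_eq_top.mp htop)
    have hmem : a ∈ Ideal.span {γ} := hmax.2 _ hspan (Ideal.mem_span_singleton_self a)
    obtain ⟨c, hc⟩ := Ideal.mem_span_singleton'.mp hmem
    have hP1 : P (j + 1) := ⟨c, by rw [pow_succ, ha, ← hc]; ring⟩
    exact Nat.findGreatest_is_greatest (Nat.lt_succ_self j) (by omega) hP1
  have h1 : a * γ ^ (j + t) = 0 := by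
    calc a * γ ^ (j + t) = (γ ^ j * a) * γ ^ t := by rw [pow_add]; ring
      _ = x * γ ^ t := by rw [ha]
      _ = 0 := hx
  have hγ : γ ^ (j + t) = 0 := (haunit.mul_right_eq_zero).mp h1
  have hjt : s ≤ j + t := by
    by_contra hlt
    push_neg at hlt
    apply hnil'
    have hms : j + t ≤ s - 1 := by omega
    calc γ ^ (s - 1) = γ ^ (j + t) * γ ^ (s - 1 - (j + t)) := by
          rw [← pow_add]; congr 1; omega
      _ = 0 := by rw [hγ, zero_mul]
  refine ⟨γ ^ (j - (s - t)) * a, ?_⟩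
  rw [ha, ← mul_assoc, ← pow_add]
  have heq : s - t + (j - (s - t)) = j := by omega
  rw [heq]

theorem stmt_9 {R : Type*} [CommRing R] [Fintype R] (hR : IsChainRing R)
    (γ : R) (s p : ℕ) (hmax : MaxIdealGen γ) (hnil : γ ^ s = 0) (hnil' : γ ^ (s - 1) ≠ 0)
    (hp : Nat.card (R ⧸ Ideal.span {γ}) = p) (hs : 0 < s)
    {n : ℕ} (C : Submodule R (Fin n → R)) (k : ℕ → ℕ)
    (K : ℕ) (hK : K = ∑ i ∈ Finset.range s, k i)
    (H : Matrix (Fin (n - k 0)) (Fin n) R) (hH : IsParityCheck H C)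
    (b : Fin (n - k 0) → ℕ) (hb : ∀ i, b i < s)
    (hb0 : Nat.card {i : Fin (n - k 0) // b i = 0} = n - K)
    (hbj : ∀ j, 1 ≤ j → j < s → Nat.card {i : Fin (n - k 0) // b i = j} = k (s - j))
    (hdiv : ∀ i, ∃ u, H i = γ ^ (b i) • u)
    (colOf : Fin (n - k 0) → Fin n) (hinj : Function.Injective colOf)
    (hid : ∀ i, H i (colOf i) = γ ^ (b i))
    (hzero : ∀ i i', i ≠ i' → b i ≤ b i' → H i' (colOf i) = 0) :
    ∀ v : Fin (n - k 0) → R,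
      Matrix.vecMul v H = 0 ↔ ∀ i, ∃ w, v i = γ ^ (s - b i) * w := by
  intro v
  constructor
  · intro hv
    have main : ∀ t, ∀ i, b i = t → ∃ w, v i = γ ^ (s - b i) * w := by
      intro t
      induction t using Nat.strong_induction_on with
      | _ t ih =>
        intro i hbi
        have hcol : ∑ i', v i' * H i' (colOf i) = 0 := by
          have h := congrFun hv (colOf i)
          simpa [Matrix.vecMul, dotProduct] using h
        have hsum : ∑ i', v i' * H i' (colOf i) = v i * γ ^ (b i) := by
          rw [Finset.sum_eq_single i]
          · rw [hid]
          · intro i' _ hne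
            by_cases hle : b i ≤ b i'
            · rw [hzero i i' (Ne.symm hne) hle, mul_zero]
            · push_neg at hle
              obtain ⟨w, hw⟩ := ih (b i') (hbi ▸ hle) i' rfl
              obtain ⟨u, hu⟩ := hdiv i'
              have hHe : H i' (colOf i) = γ ^ (b i') * u (colOf i) := by
                rw [hu]; simp
              rw [hw, hHe]
              calc γ ^ (s - b i') * w * (γ ^ (b i') * u (colOf i))
                  = γ ^ (s - b i' + b i') * (w * u (colOf i)) := by
                    rw [pow_add]; ring
                _ = 0 := by
                    rw [Nat.sub_add_cancel (le_of_lt (hb i')), hnil, zero_mul]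
          · intro h; exact absurd (Finset.mem_univ i) h
        have hvi : v i * γ ^ (b i) = 0 := by rw [← hsum]; exact hcol
        exact ann_lemma hmax hnil hnil' (le_of_lt (hb i)) hvi
    exact fun i => main (b i) i rfl
  · intro hv
    funext c
    show (Matrix.vecMul v H) c = 0
    rw [Matrix.vecMul]
    simp only [dotProduct]
    apply Finset.sum_eq_zero
    intro i _
    obtain ⟨w, hw⟩ := hv i
    obtain ⟨u, hu⟩ := hdiv i
    rw [hw, hu]
    simp only [Pi.smul_apply, smul_eq_mul]
    calc γ ^ (s - b i) * w * (γ ^ (b i) * u c)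
        = γ ^ (s - b i + b i) * (w * u c) := by rw [pow_add]; ring
      _ = 0 := by rw [Nat.sub_add_cancel (le_of_lt (hb i)), hnil, zero_mul]
end

section
/- Let C be a linear code of length n over a finite chain ring with p^s elements, with weight distributions A_j for C and A_j^\perp for C^\perp. Then for every 0 \le \nu \le n: \sum_{j=0}^{n-\nu} \binom{n-j}{\nu} A_j = (|C| / p^{s\nu}) \sum_{j=0}^{\nu} \binom{n-j}{n-\nu} A_j^\perp. -/
open Matrix Finset

lemma addChar_map_sum {R M : Type*} [AddCommMonoid R] [CommMonoid M] (ψ : AddChar R M)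
    {ι : Type*} (s : Finset ι) (f : ι → R) :
    ψ (∑ i ∈ s, f i) = ∏ i ∈ s, ψ (f i) := by
  induction s using Finset.cons_induction with
  | empty => simp
  | cons a s ha ih => rw [Finset.sum_cons, Finset.prod_cons, AddChar.map_add_eq_mul, ih]

lemma core_count {R : Type*} [CommRing R] [Fintype R]
    (ψ : AddChar R ℂ) (hψ : ∀ r : R, r ≠ 0 → ∃ x : R, ψ (r * x) ≠ 1)
    {ι : Type*} [Fintype ι] (D : Submodule R (ι → R)) :
    Nat.card D * Nat.card {v : ι → R // ∀ d ∈ D, ∑ i, v i * d i = 0}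
      = Fintype.card R ^ Fintype.card ι := by
  classical
  haveI : Fintype D := Fintype.ofFinite D
  -- sum over single coordinate
  have char_sum : ∀ r : R, ∑ x : R, ψ (r * x) = if r = 0 then (Fintype.card R : ℂ) else 0 := by
    intro r
    by_cases hr : r = 0
    · simp [hr, Finset.card_univ]
    · rw [if_neg hr]
      have hne : ψ.compAddMonoidHom (AddMonoidHom.mulLeft r) ≠ 0 := by
        obtain ⟨x, hx⟩ := hψ r hr
        intro h
        exact hx (by simpa using congrFun (congrArg DFunLike.coe h) x)
      have := (AddChar.sum_eq_zero_iff_ne_zero (ψ := ψ.compAddMonoidHom (AddMonoidHom.mulLeft r))).mpr hne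
      simpa using this
  -- the double sum
  set S : ℂ := ∑ v : ι → R, ∑ d : D, ψ (∑ i, v i * (d : ι → R) i) with hS
  -- computation 1 : S = card D * card perp
  have comp1 : S = (Nat.card D : ℂ) * (Nat.card {v : ι → R // ∀ d ∈ D, ∑ i, v i * d i = 0} : ℂ) := by
    have hv : ∀ v : ι → R, ∑ d : D, ψ (∑ i, v i * (d : ι → R) i)
        = if (∀ d ∈ D, ∑ i, v i * d i = 0) then (Nat.card D : ℂ) else 0 := by
      intro v
      set φ : AddChar D ℂ := ψ.compAddMonoidHom
        { toFun := fun d => ∑ i, v i * (d : ι → R) i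
          map_zero' := by simp
          map_add' := by
            intro a b
            simp [Submodule.coe_add, Pi.add_apply, mul_add, Finset.sum_add_distrib] } with hφ
      have hsum : ∑ d : D, ψ (∑ i, v i * (d : ι → R) i) = ∑ d : D, φ d := rfl
      rw [hsum]
      by_cases hc : ∀ d ∈ D, ∑ i, v i * d i = 0
      · rw [if_pos hc]
        have : ∀ d : D, φ d = 1 := fun d => by
          simp only [hφ, AddChar.compAddMonoidHom_apply, AddMonoidHom.coe_mk, ZeroHom.coe_mk]
          rw [hc d d.2, AddChar.map_zero_eq_one]
        simp [this, Finset.card_univ, Nat.card_eq_fintype_card]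
      · rw [if_neg hc]
        push_neg at hc
        obtain ⟨d, hd, hdne⟩ := hc
        have hφne : φ ≠ 0 := by
          obtain ⟨x, hx⟩ := hψ _ hdne
          intro h
          apply hx
          have h2 : φ (x • ⟨d, hd⟩) = 1 := by
            rw [h]; exact AddChar.zero_apply _
          simp only [hφ, AddChar.compAddMonoidHom_apply, AddMonoidHom.coe_mk, ZeroHom.coe_mk,
            Submodule.coe_smul, Pi.smul_apply, smul_eq_mul] at h2
          rw [← h2]
          congr 1
          rw [Finset.sum_mul]
          exact Finset.sum_congr rfl fun i _ => by ring
        exact (AddChar.sum_eq_zero_iff_ne_zero (ψ := φ)).mpr hφne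
    rw [hS]
    simp_rw [hv]
    rw [Finset.sum_ite, Finset.sum_const, Finset.sum_const_zero, add_zero,
      Nat.card_eq_fintype_card (α := {v : ι → R // ∀ d ∈ D, ∑ i, v i * d i = 0}),
      Fintype.card_subtype, Nat.card_eq_fintype_card]
    ring
  -- computation 2 : S = card R ^ card ι
  have comp2 : S = (Fintype.card R : ℂ) ^ Fintype.card ι := by
    rw [hS, Finset.sum_comm]
    have hd : ∀ d : D, ∑ v : ι → R, ψ (∑ i, v i * (d : ι → R) i)
        = if (d : ι → R) = 0 then (Fintype.card R : ℂ) ^ Fintype.card ι else 0 := by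
      intro d
      have h1 : ∀ v : ι → R, ψ (∑ i, v i * (d : ι → R) i) = ∏ i, ψ (v i * (d : ι → R) i) :=
        fun v => addChar_map_sum ψ univ _
      simp_rw [h1]
      rw [← Fintype.prod_sum (fun i (x : R) => ψ (x * (d : ι → R) i))]
      have h2 : ∀ i, ∑ x : R, ψ (x * (d : ι → R) i)
          = if (d : ι → R) i = 0 then (Fintype.card R : ℂ) else 0 := by
        intro i
        rw [← char_sum ((d : ι → R) i)]
        exact Finset.sum_congr rfl fun x _ => by rw [mul_comm]
      simp_rw [h2]
      by_cases hdz : (d : ι → R) = 0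
      · rw [if_pos hdz]
        have : ∀ i, ((d : ι → R) i = 0) := fun i => by rw [hdz]; rfl
        simp [this, Finset.prod_const, Finset.card_univ]
      · rw [if_neg hdz]
        obtain ⟨i, hi⟩ : ∃ i, (d : ι → R) i ≠ 0 := by
          by_contra h
          push_neg at h
          exact hdz (funext h)
        exact Finset.prod_eq_zero (Finset.mem_univ i) (by rw [if_neg hi])
    simp_rw [hd]
    simp [ZeroMemClass.coe_eq_zero]
  rw [← Nat.cast_inj (R := ℂ)]
  push_cast
  rw [← comp1, comp2]

lemma exists_good_char (R : Type*) [CommRing R] [Fintype R] (hR : IsChainRing R) :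
    ∃ ψ : AddChar R ℂ, ∀ r : R, r ≠ 0 → ∃ x : R, ψ (r * x) ≠ 1 := by
  classical
  by_cases hnt : ∃ y : R, y ≠ 0
  · -- find y ≠ 0 with minimal span cardinality
    obtain ⟨y₀, hy₀⟩ := hnt
    obtain ⟨y, hy, hmin⟩ := Finset.exists_min_image (univ.filter (fun r : R => r ≠ 0))
      (fun r => (Ideal.span {r} : Set R).ncard) ⟨y₀, by simp [hy₀]⟩
    simp only [mem_filter, mem_univ, true_and] at hy
    have key : ∀ r : R, r ≠ 0 → y ∈ Ideal.span ({r} : Set R) := by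
      intro r hr
      rcases hR (Ideal.span {y}) (Ideal.span {r}) with h | h
      · exact h (Ideal.subset_span rfl)
      · have h1 : (Ideal.span {r} : Set R).ncard ≤ (Ideal.span {y} : Set R).ncard :=
          Set.ncard_le_ncard h (Set.toFinite _)
        have h2 := hmin r (by simp [hr])
        have : (Ideal.span {y} : Set R) = (Ideal.span {r} : Set R) :=
          (Set.eq_of_subset_of_ncard_le h (le_antisymm h1 h2 ▸ le_rfl) (Set.toFinite _)).symm
        have := this ▸ (Ideal.subset_span rfl : y ∈ (Ideal.span {y} : Set R))
        exact this
    -- get a character nontrivial at y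
    haveI : NeZero ((Monoid.exponent (Multiplicative R) : ℂ)) := by
      refine ⟨?_⟩
      exact_mod_cast Monoid.exponent_ne_zero_of_finite (G := Multiplicative R)
    obtain ⟨φ, hφ⟩ := CommGroup.exists_apply_ne_one_of_hasEnoughRootsOfUnity
      (G := Multiplicative R) (M := ℂ)
      (a := Multiplicative.ofAdd y) (by simpa using hy)
    refine ⟨AddChar.toMonoidHomEquiv.symm ((Units.coeHom ℂ).comp φ), ?_⟩
    intro r hr
    obtain ⟨x, hx⟩ := Ideal.mem_span_singleton'.mp (key r hr)
    refine ⟨x, ?_⟩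
    rw [mul_comm, hx]
    simp only [AddChar.coe_toMonoidHomEquiv_symm, Function.comp_apply, MonoidHom.coe_comp,
      Units.coeHom_apply]
    exact fun h => hφ (Units.ext h)
  · push_neg at hnt
    exact ⟨1, fun r hr => absurd (hnt r) hr⟩

lemma count1 {R : Type*} [CommRing R] [Fintype R] {n : ℕ} (D : Submodule R (Fin n → R)) (μ : ℕ) :
    ∑ j ∈ Finset.range (n + 1), (n - j).choose μ * weightDist D j
      = ∑ T ∈ powersetCard μ (univ : Finset (Fin n)),
          Nat.card {c : Fin n → R // c ∈ D ∧ ∀ i ∈ T, c i = 0} := by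
  classical
  set CF : Finset (Fin n → R) := univ.filter (· ∈ D) with hCF
  have wt_eq : ∀ c : Fin n → R, wt c = (univ.filter fun i => c i ≠ 0).card := fun c => by
    rw [wt, Nat.card_eq_fintype_card, Fintype.card_subtype]
  have zeros_card : ∀ c : Fin n → R, (univ.filter fun i => c i = 0).card = n - wt c := by
    intro c
    have h := Finset.card_filter_add_card_filter_not (s := (univ : Finset (Fin n)))
      (p := fun i => c i = 0)
    rw [Finset.card_univ, Fintype.card_fin] at h
    have h2 := wt_eq c
    simp only [ne_eq] at h2
    omega
  have wt_le : ∀ c : Fin n → R, wt c ≤ n := by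
    intro c
    rw [wt_eq]
    exact (Finset.card_filter_le _ _).trans (by simp)
  -- LHS = ∑ c ∈ CF, (n - wt c).choose μ
  have lhs_eq : ∑ j ∈ Finset.range (n + 1), (n - j).choose μ * weightDist D j
      = ∑ c ∈ CF, (n - wt c).choose μ := by
    rw [← Finset.sum_fiberwise_of_maps_to (g := wt) (t := Finset.range (n + 1))
      (fun c hc => Finset.mem_range.mpr (Nat.lt_succ_of_le (wt_le c)))]
    apply Finset.sum_congr rfl
    intro j hj
    have hw : weightDist D j = (CF.filter fun c => wt c = j).card := by
      rw [weightDist, Nat.card_eq_fintype_card, Fintype.card_subtype, hCF,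
        Finset.filter_filter]
    rw [hw, mul_comm, ← smul_eq_mul, ← Finset.sum_const]
    apply Finset.sum_congr rfl
    intro c hc
    rw [(Finset.mem_filter.mp hc).2]
  -- RHS = same
  have rhs_eq : ∑ T ∈ powersetCard μ (univ : Finset (Fin n)),
        Nat.card {c : Fin n → R // c ∈ D ∧ ∀ i ∈ T, c i = 0}
      = ∑ c ∈ CF, (n - wt c).choose μ := by
    have step : ∀ T : Finset (Fin n),
        Nat.card {c : Fin n → R // c ∈ D ∧ ∀ i ∈ T, c i = 0}
          = ∑ c ∈ CF, if (∀ i ∈ T, c i = 0) then 1 else 0 := by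
      intro T
      rw [Nat.card_eq_fintype_card, Fintype.card_subtype, ← Finset.filter_filter,
        Finset.card_filter, hCF]
    simp_rw [step]
    rw [Finset.sum_comm]
    apply Finset.sum_congr rfl
    intro c _
    have hcond : ∀ T : Finset (Fin n), (∀ i ∈ T, c i = 0) ↔ T ⊆ univ.filter (fun i => c i = 0) := by
      intro T
      simp [Finset.subset_iff]
    simp_rw [hcond]
    rw [← Finset.card_filter]
    have hfil : (powersetCard μ (univ : Finset (Fin n))).filter
        (fun T => T ⊆ univ.filter (fun i => c i = 0))
        = powersetCard μ (univ.filter (fun i => c i = 0)) := by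
      ext T
      simp only [Finset.mem_filter, Finset.mem_powersetCard, Finset.subset_univ, true_and]
      tauto
    rw [hfil, Finset.card_powersetCard, zeros_card]
  rw [lhs_eq, rhs_eq]

lemma stepC {R : Type*} [CommRing R] [Fintype R]
    (ψ : AddChar R ℂ) (hψ : ∀ r : R, r ≠ 0 → ∃ x : R, ψ (r * x) ≠ 1)
    {n : ℕ} (C : Submodule R (Fin n → R)) (T : Finset (Fin n)) :
    Nat.card {c : Fin n → R // c ∈ C ∧ ∀ i ∈ T, c i = 0} * Fintype.card R ^ T.card
      = Nat.card C * Nat.card {d : Fin n → R // d ∈ dualCode C ∧ ∀ i ∉ T, d i = 0} := by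
  classical
  set res : (Fin n → R) →ₗ[R] ({i : Fin n // i ∈ T} → R) :=
    LinearMap.funLeft R R (fun i => (i : Fin n)) with hres
  set D : Submodule R ({i : Fin n // i ∈ T} → R) := Submodule.map res C with hD
  set g : C →+ ({i : Fin n // i ∈ T} → R) := (res.comp C.subtype).toAddMonoidHom with hg
  -- (a) card C = card D * card K
  have ha : Nat.card C = Nat.card D * Nat.card {c : Fin n → R // c ∈ C ∧ ∀ i ∈ T, c i = 0} := by
    rw [AddSubgroup.card_eq_card_quotient_mul_card_addSubgroup g.ker]
    congr 1
    · rw [Nat.card_congr (QuotientAddGroup.quotientKerEquivRange g).toEquiv]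
      apply Nat.card_congr
      apply Equiv.subtypeEquivRight
      intro x
      simp only [AddMonoidHom.mem_range, hg, LinearMap.toAddMonoidHom_coe, LinearMap.coe_comp,
        Function.comp_apply, Submodule.coe_subtype, hD, Submodule.mem_map]
      constructor
      · rintro ⟨⟨c, hc⟩, rfl⟩; exact ⟨c, hc, rfl⟩
      · rintro ⟨c, hc, rfl⟩; exact ⟨⟨c, hc⟩, rfl⟩
    · apply Nat.card_congr
      refine ⟨fun d => ⟨d.1.1, d.1.2, fun i hi => ?_⟩,
              fun c => ⟨⟨c.1, c.2.1⟩, ?_⟩, fun d => rfl, fun c => rfl⟩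
      · exact congrFun (AddMonoidHom.mem_ker.mp d.2) ⟨i, hi⟩
      · ext i
        simp only [hg, LinearMap.toAddMonoidHom_coe, LinearMap.coe_comp, Function.comp_apply,
          Submodule.coe_subtype, hres, LinearMap.funLeft_apply, Pi.zero_apply]
        exact c.2.2 i.1 i.2
  -- (b) card M = card perp D
  have hb : Nat.card {d : Fin n → R // d ∈ dualCode C ∧ ∀ i ∉ T, d i = 0}
      = Nat.card {v : {i : Fin n // i ∈ T} → R // ∀ w ∈ D, ∑ i, v i * w i = 0} := by
    apply Nat.card_congr
    refine ⟨fun d => ⟨fun i => d.1 i.1, ?_⟩,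
            fun v => ⟨fun i => if h : i ∈ T then v.1 ⟨i, h⟩ else 0, ?_, ?_⟩, ?_, ?_⟩
    · rintro w hw
      rw [hD] at hw
      obtain ⟨c, hc, rfl⟩ := Submodule.mem_map.mp hw
      have key : ∑ i : {i : Fin n // i ∈ T}, d.1 i.1 * (res c) i = ∑ i ∈ T, d.1 i * c i := by
        rw [← Finset.sum_coe_sort T (fun i => d.1 i * c i)]
        rfl
      rw [key, Finset.sum_subset (Finset.subset_univ T)
        (fun i _ hi => by rw [d.2.2 i hi, zero_mul])]
      exact d.2.1 c hc
    · -- extension is in dual code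
      intro c hc
      rw [← Finset.sum_subset (Finset.subset_univ T) ?h1]
      case h1 =>
        intro i _ hi
        simp only [dif_neg hi, zero_mul]
      have key : ∑ i ∈ T, (if h : i ∈ T then v.1 ⟨i, h⟩ else 0) * c i
          = ∑ i : {i : Fin n // i ∈ T}, v.1 i * (res c) i := by
        rw [← Finset.sum_coe_sort T (fun i => (if h : i ∈ T then v.1 ⟨i, h⟩ else 0) * c i)]
        apply Finset.sum_congr rfl
        intro i _
        rw [dif_pos i.2]
        rfl
      rw [key]
      exact v.2 (res c) (Submodule.mem_map.mpr ⟨c, hc, rfl⟩)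
    · intro i hi
      simp only [dif_neg hi]
    · intro d
      apply Subtype.ext
      funext i
      by_cases hi : i ∈ T
      · simp only [dif_pos hi]
      · simp only [dif_neg hi]
        exact (d.2.2 i hi).symm
    · intro v
      apply Subtype.ext
      funext i
      simp only [dif_pos i.2]
  -- (c) assemble
  have hcore := core_count ψ hψ D
  rw [Fintype.card_coe] at hcore
  calc Nat.card {c : Fin n → R // c ∈ C ∧ ∀ i ∈ T, c i = 0} * Fintype.card R ^ T.card
      = Nat.card {c : Fin n → R // c ∈ C ∧ ∀ i ∈ T, c i = 0} *
          (Nat.card D * Nat.card {v : {i : Fin n // i ∈ T} → R // ∀ w ∈ D, ∑ i, v i * w i = 0}) := by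
        rw [hcore]
    _ = Nat.card C * Nat.card {d : Fin n → R // d ∈ dualCode C ∧ ∀ i ∉ T, d i = 0} := by
        rw [ha, hb]; ring


theorem stmt_13 {R : Type*} [CommRing R] [Fintype R] (hR : IsChainRing R)
    (p s : ℕ) (hcard : Nat.card R = p ^ s)
    {n : ℕ} (C : Submodule R (Fin n → R)) (ν : ℕ) (hν : ν ≤ n) :
    (∑ j ∈ Finset.range (n - ν + 1), (n - j).choose ν * weightDist C j) * p ^ (s * ν)
      = Nat.card C *
        ∑ j ∈ Finset.range (ν + 1), (n - j).choose (n - ν) * weightDist (dualCode C) j := by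
  classical
  obtain ⟨ψ, hψ⟩ := exists_good_char R hR
  have hL : ∑ j ∈ Finset.range (n - ν + 1), (n - j).choose ν * weightDist C j
      = ∑ j ∈ Finset.range (n + 1), (n - j).choose ν * weightDist C j := by
    apply Finset.sum_subset (Finset.range_subset_range.mpr (by omega))
    intro j hj hj2
    rw [Finset.mem_range] at hj hj2
    rw [Nat.choose_eq_zero_of_lt (by omega), zero_mul]
  have hR2 : ∑ j ∈ Finset.range (ν + 1), (n - j).choose (n - ν) * weightDist (dualCode C) j
      = ∑ j ∈ Finset.range (n + 1), (n - j).choose (n - ν) * weightDist (dualCode C) j := by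
    apply Finset.sum_subset (Finset.range_subset_range.mpr (by omega))
    intro j hj hj2
    rw [Finset.mem_range] at hj hj2
    rw [Nat.choose_eq_zero_of_lt (by omega), zero_mul]
  rw [hL, hR2, count1 C ν, count1 (dualCode C) (n - ν)]
  have hre : ∑ T ∈ powersetCard (n - ν) (univ : Finset (Fin n)),
        Nat.card {d : Fin n → R // d ∈ dualCode C ∧ ∀ i ∈ T, d i = 0}
      = ∑ T ∈ powersetCard ν (univ : Finset (Fin n)),
        Nat.card {d : Fin n → R // d ∈ dualCode C ∧ ∀ i ∉ T, d i = 0} := by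
    apply Finset.sum_nbij' (i := fun T => Tᶜ) (j := fun T => Tᶜ)
    · intro T hT
      rw [Finset.mem_powersetCard_univ] at hT ⊢
      rw [Finset.card_compl, Fintype.card_fin, hT]
      omega
    · intro T hT
      rw [Finset.mem_powersetCard_univ] at hT ⊢
      rw [Finset.card_compl, Fintype.card_fin, hT]
    · intro T _
      exact compl_compl T
    · intro T _
      exact compl_compl T
    · intro T hT
      apply Nat.card_congr
      apply Equiv.subtypeEquivRight
      intro d
      simp [Finset.mem_compl]
  rw [hre, Finset.sum_mul, Finset.mul_sum]
  apply Finset.sum_congr rfl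
  intro T hT
  have hTc : T.card = ν := Finset.mem_powersetCard_univ.mp hT
  have hstep := stepC ψ hψ C T
  rw [hTc] at hstep
  rw [pow_mul, ← hcard, Nat.card_eq_fintype_card (α := R)]
  exact hstep
end

section
/- Let C be a linear code of length n over a finite chain ring with p^s elements, with weight distributions A_j for C and A_j^\perp for its dual. Then for every 0 \le \nu \le n: \sum_{j=0}^{n} \binom{j}{\nu} A_j = (|C| / p^{s\nu}) \sum_{j=0}^{\nu} (-1)^j \binom{n-j}{n-\nu} (p^s - 1)^{\nu - j} A_j^\perp. -/
open Matrix Finset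

section Aux
open Finset
attribute [local instance] Classical.propDecidable

private lemma wt_eq_card {R : Type*} [Zero R] [Fintype R] {n : ℕ} (v : Fin n → R) :
    wt v = (Finset.univ.filter (fun i => v i ≠ 0)).card := by
  have h : wt v = Nat.card {i : Fin n // v i ≠ 0} := rfl
  rw [h, Nat.card_eq_fintype_card, Fintype.card_subtype]

private lemma wt_le {R : Type*} [Zero R] [Fintype R] {n : ℕ} (v : Fin n → R) : wt v ≤ n := by
  rw [wt_eq_card]
  exact le_trans (Finset.card_filter_le _ _) (by simp)

private lemma map_finset_sum' {A M ι : Type*} [AddCommMonoid A] [CommMonoid M]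
    (χ : AddChar A M) (s : Finset ι) (f : ι → A) :
    χ (∑ i ∈ s, f i) = ∏ i ∈ s, χ (f i) := by
  classical
  induction s using Finset.induction_on with
  | empty => simp
  | insert _ _ h ih => rw [Finset.sum_insert h, Finset.prod_insert h, AddChar.map_add_eq_mul, ih]

/-- Existence of a "generating character": nontrivial on every nonzero ideal. -/
private lemma exists_genChar {R : Type*} [CommRing R] [Fintype R] [Nontrivial R]
    (hR : IsChainRing R) :
    ∃ χ : AddChar R ℂ, ∀ I : Ideal R, I ≠ ⊥ → ∃ r ∈ I, χ r ≠ 1 := by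
  classical
  -- pick a nonzero ideal of minimal cardinality
  have hA : ∃ k, ∃ I : Ideal R, I ≠ ⊥ ∧ Nat.card I = k :=
    ⟨Nat.card (⊤ : Ideal R), ⊤, by simp, rfl⟩
  obtain ⟨I₀, hI₀, hcard₀⟩ := Nat.sInf_mem (s := {k | ∃ I : Ideal R, I ≠ ⊥ ∧ Nat.card I = k}) hA
  obtain ⟨x, hxI, hx0⟩ := Submodule.exists_mem_ne_zero_of_ne_bot hI₀
  obtain ⟨χ, hχ⟩ := AddChar.exists_apply_ne_zero.mpr hx0
  refine ⟨χ, fun I hI => ⟨x, ?_, hχ⟩⟩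
  -- every nonzero ideal contains I₀
  rcases hR I I₀ with h | h
  · -- then I = I₀ by minimality of cardinality
    have hle : sInf {k | ∃ I : Ideal R, I ≠ ⊥ ∧ Nat.card I = k} ≤ Nat.card I :=
      Nat.sInf_le ⟨I, hI, rfl⟩
    rw [← hcard₀] at hle
    have hsub : (I : Set R) ⊆ (I₀ : Set R) := h
    have : (I : Set R) = (I₀ : Set R) :=
      Set.eq_of_subset_of_ncard_le hsub
        (by rwa [← Nat.card_coe_set_eq, ← Nat.card_coe_set_eq]) (Set.toFinite _)
    rw [show I = I₀ from SetLike.coe_injective this]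
    exact hxI
  · exact h hxI

/-- Character sum over a finite module along a linear functional. -/
private lemma sum_char_eq {R : Type*} [CommRing R] {M : Type*} [AddCommGroup M] [Module R M]
    [Fintype M] (χ : AddChar R ℂ) (hχ : ∀ I : Ideal R, I ≠ ⊥ → ∃ r ∈ I, χ r ≠ 1)
    (f : M →ₗ[R] R) :
    ∑ m : M, χ (f m) = if f = 0 then (Fintype.card M : ℂ) else 0 := by
  split_ifs with h
  · subst h; simp
  · obtain ⟨r, hr, hr1⟩ := hχ (LinearMap.range f) (by rwa [Ne, LinearMap.range_eq_bot])
    obtain ⟨m₀, rfl⟩ := hr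
    have key : (∑ m : M, χ (f m)) * χ (f m₀) = ∑ m : M, χ (f m) := by
      rw [Finset.sum_mul]
      simp_rw [← AddChar.map_add_eq_mul, ← map_add]
      exact Fintype.sum_equiv (Equiv.addRight m₀) _ _ (fun m => rfl)
    have h2 : (∑ m : M, χ (f m)) * (χ (f m₀) - 1) = 0 := by
      rw [mul_sub, key, mul_one, sub_self]
    exact (mul_eq_zero.mp h2).resolve_right (sub_ne_zero.mpr hr1)

private lemma sum_char_mul {R : Type*} [CommRing R] [Fintype R]
    (χ : AddChar R ℂ) (hχ : ∀ I : Ideal R, I ≠ ⊥ → ∃ r ∈ I, χ r ≠ 1) (a : R) :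
    ∑ r : R, χ (r * a) = if a = 0 then (Fintype.card R : ℂ) else 0 := by
  have h := sum_char_eq χ hχ ((LinearMap.id : R →ₗ[R] R).smulRight a)
  simp only [LinearMap.smulRight_apply, LinearMap.id_apply, smul_eq_mul] at h
  rw [h]
  congr 1
  simp only [eq_iff_iff]
  constructor
  · intro h'; simpa using LinearMap.congr_fun h' 1
  · intro h'; ext r; simp [h']

end Aux
section Aux2
open Finset
attribute [local instance] Classical.propDecidable

private def pairingL {R : Type*} [CommRing R] {n : ℕ} (v : Fin n → R) :
    (Fin n → R) →ₗ[R] R where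
  toFun c := ∑ i, v i * c i
  map_add' a b := by simp [mul_add, Finset.sum_add_distrib]
  map_smul' r c := by simp [Finset.mul_sum, mul_left_comm]

private lemma mem_dualCode {R : Type*} [CommRing R] {n : ℕ} (C : Submodule R (Fin n → R))
    (v : Fin n → R) : v ∈ dualCode C ↔ ∀ c ∈ C, ∑ i, v i * c i = 0 := Iff.rfl

private lemma sum_char_code {R : Type*} [CommRing R] [Fintype R] {n : ℕ}
    (χ : AddChar R ℂ) (hχ : ∀ I : Ideal R, I ≠ ⊥ → ∃ r ∈ I, χ r ≠ 1)
    (C : Submodule R (Fin n → R)) [Fintype ↥C] (v : Fin n → R) :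
    ∑ c : ↥C, χ (∑ i, v i * (c : Fin n → R) i)
      = if v ∈ dualCode C then (Nat.card ↥C : ℂ) else 0 := by
  have h := sum_char_eq χ hχ ((pairingL v).comp C.subtype)
  simp only [LinearMap.comp_apply, Submodule.subtype_apply, pairingL,
    LinearMap.coe_mk, AddHom.coe_mk] at h
  rw [h, Nat.card_eq_fintype_card]
  congr 1
  simp only [eq_iff_iff]
  constructor
  · intro h' c hc
    simpa [pairingL] using LinearMap.congr_fun h' ⟨c, hc⟩
  · intro h'
    ext c
    simpa [pairingL] using h' c.1 c.2

private lemma duality_count {R : Type*} [CommRing R] [Fintype R] {n : ℕ}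
    (χ : AddChar R ℂ) (hχ : ∀ I : Ideal R, I ≠ ⊥ → ∃ r ∈ I, χ r ≠ 1)
    (C : Submodule R (Fin n → R)) (U : Finset (Fin n)) :
    (∑ c : Fin n → R, if c ∈ C ∧ ∀ i ∈ U, c i = 0 then (1 : ℂ) else 0)
        * (Fintype.card R : ℂ) ^ U.card
      = (Nat.card ↥C : ℂ) *
        ∑ d : Fin n → R, if d ∈ dualCode C ∧ ∀ i ∉ U, d i = 0 then (1 : ℂ) else 0 := by
  classical
  haveI : Fintype ↥C := Fintype.ofFinite _
  -- the extension-by-zero map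
  set ext : (↥U → R) → (Fin n → R) := fun a i => if h : i ∈ U then a ⟨i, h⟩ else 0 with hext
  -- the double sum
  have key : ∀ (a : ↥U → R) (c : Fin n → R),
      (∑ i : ↥U, a i * c i) = ∑ i, ext a i * c i := by
    intro a c
    rw [show (∑ i, ext a i * c i) = ∑ i ∈ U, ext a i * c i from
      (Finset.sum_subset (Finset.subset_univ U) (by intro i _ hi; simp [hext, hi])).symm,
      ← Finset.sum_attach U (fun i => ext a i * c i)]
    refine Finset.sum_congr rfl fun i _ => ?_
    simp [hext, i.2]
  have order1 : ∀ c : ↥C, (∑ a : ↥U → R, χ (∑ i : ↥U, a i * (c : Fin n → R) i))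
      = if (∀ i ∈ U, (c : Fin n → R) i = 0) then (Fintype.card R : ℂ) ^ U.card else 0 := by
    intro c
    have : ∀ a : ↥U → R, χ (∑ i : ↥U, a i * (c : Fin n → R) i)
        = ∏ i : ↥U, χ (a i * (c : Fin n → R) i) := fun a => map_finset_sum' χ _ _
    simp_rw [this]
    rw [← Fintype.piFinset_univ, ← Finset.prod_univ_sum (fun _ => (Finset.univ : Finset R))
      (fun (i : {x // x ∈ U}) (r : R) => χ (r * (c : Fin n → R) i.1))]
    have hfac : ∀ i : ↥U, (∑ r : R, χ (r * (c : Fin n → R) i))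
        = if (c : Fin n → R) i.1 = 0 then (Fintype.card R : ℂ) else 0 :=
      fun i => sum_char_mul χ hχ _
    simp_rw [hfac]
    by_cases hc : ∀ i ∈ U, (c : Fin n → R) i = 0
    · rw [if_pos hc, Finset.prod_congr rfl (fun i _ => if_pos (hc i.1 i.2)),
        Finset.prod_const, Finset.card_univ, Fintype.card_coe]
    · rw [if_neg hc]
      push_neg at hc
      obtain ⟨i, hiU, hi⟩ := hc
      exact Finset.prod_eq_zero (Finset.mem_univ (⟨i, hiU⟩ : ↥U)) (if_neg hi)
  -- compute the double sum both ways
  have e1 : (∑ c : ↥C, ∑ a : ↥U → R, χ (∑ i : ↥U, a i * (c : Fin n → R) i))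
      = (∑ c : Fin n → R, if c ∈ C ∧ ∀ i ∈ U, c i = 0 then (1 : ℂ) else 0)
          * (Fintype.card R : ℂ) ^ U.card := by
    rw [Finset.sum_congr rfl (fun c _ => order1 c)]
    rw [show (∑ c : Fin n → R, if c ∈ C ∧ ∀ i ∈ U, c i = 0 then (1 : ℂ) else 0)
        = ∑ c : ↥C, (if ∀ i ∈ U, (c : Fin n → R) i = 0 then (1 : ℂ) else 0) from ?_]
    · rw [Finset.sum_mul]
      refine Finset.sum_congr rfl fun c _ => ?_
      split_ifs <;> simp
    · rw [← Finset.sum_filter_add_sum_filter_not Finset.univ (fun c : Fin n → R => c ∈ C)]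
      have hz : ∑ c ∈ Finset.univ.filter (fun c : Fin n → R => ¬ c ∈ C),
          (if c ∈ C ∧ ∀ i ∈ U, c i = 0 then (1 : ℂ) else 0) = 0 := by
        refine Finset.sum_eq_zero fun c hc => ?_
        rw [Finset.mem_filter] at hc
        simp [hc.2]
      rw [hz, add_zero, Finset.sum_subtype (p := fun c : Fin n → R => c ∈ C)
        (Finset.univ.filter (fun c : Fin n → R => c ∈ C)) (by simp)
        (fun c => if c ∈ C ∧ ∀ i ∈ U, c i = 0 then (1 : ℂ) else 0)]
      refine Finset.sum_congr rfl fun c _ => ?_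
      simp [c.2]
  have e2 : (∑ c : ↥C, ∑ a : ↥U → R, χ (∑ i : ↥U, a i * (c : Fin n → R) i))
      = (Nat.card ↥C : ℂ) *
        ∑ d : Fin n → R, if d ∈ dualCode C ∧ ∀ i ∉ U, d i = 0 then (1 : ℂ) else 0 := by
    rw [Finset.sum_comm]
    have h1 : ∀ a : ↥U → R, (∑ c : ↥C, χ (∑ i : ↥U, a i * (c : Fin n → R) i))
        = if ext a ∈ dualCode C then (Nat.card ↥C : ℂ) else 0 := by
      intro a
      rw [Finset.sum_congr rfl (fun c _ => by rw [key a (c : Fin n → R)])]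
      exact sum_char_code χ hχ C (ext a)
    rw [Finset.sum_congr rfl (fun a _ => h1 a)]
    -- now reindex
    have h2 : (∑ a : ↥U → R, if ext a ∈ dualCode C then (1 : ℂ) else 0)
        = ∑ d : Fin n → R, if d ∈ dualCode C ∧ ∀ i ∉ U, d i = 0 then (1 : ℂ) else 0 := by
      rw [← Equiv.sum_comp (Equiv.piEquivPiSubtypeProd (fun i => i ∈ U) (fun _ => R)).symm
        (fun d : Fin n → R => if d ∈ dualCode C ∧ ∀ i ∉ U, d i = 0 then (1 : ℂ) else 0)]
      rw [Fintype.sum_prod_type]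
      have h3 : ∀ (a : ↥U → R) (b : {i : Fin n // ¬ i ∈ U} → R),
          (if (Equiv.piEquivPiSubtypeProd (fun i => i ∈ U) (fun _ => R)).symm (a, b) ∈ dualCode C
              ∧ ∀ i ∉ U, (Equiv.piEquivPiSubtypeProd (fun i => i ∈ U) (fun _ => R)).symm (a, b) i = 0
            then (1 : ℂ) else 0)
          = if b = 0 then (if ext a ∈ dualCode C then (1 : ℂ) else 0) else 0 := by
        intro a b
        by_cases hb : b = 0
        · subst hb
          have hsymm : (Equiv.piEquivPiSubtypeProd (fun i => i ∈ U) (fun _ => R)).symm (a, 0)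
              = ext a := by
            funext i
            by_cases hi : i ∈ U <;>
              simp [Equiv.piEquivPiSubtypeProd, hext, hi]
          rw [hsymm, if_pos rfl]
          congr 1
          simp only [eq_iff_iff, and_iff_left_iff_imp]
          intro _ i hi
          simp [hext, hi]
        · rw [if_neg hb, if_neg]
          rintro ⟨-, h0⟩
          apply hb
          funext i
          have := h0 i.1 i.2
          simpa [Equiv.piEquivPiSubtypeProd, dif_neg i.2] using this
      rw [Finset.sum_congr rfl (fun a _ => Finset.sum_congr rfl (fun b _ => h3 a b))]
      refine Finset.sum_congr rfl fun a _ => ?_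
      simp
    rw [← h2, Finset.mul_sum]
    refine Finset.sum_congr rfl fun a _ => ?_
    split_ifs <;> simp
  rw [← e1, e2]

end Aux2
section Aux3
open Finset
attribute [local instance] Classical.propDecidable

private lemma count_supersets_s14 {n ν : ℕ} (U : Finset (Fin n)) :
    ((Finset.powersetCard ν (Finset.univ : Finset (Fin n))).filter (fun T => U ⊆ T)).card
      = if U.card ≤ ν then (n - U.card).choose (ν - U.card) else 0 := by
  split_ifs with h
  · rw [show (n - U.card).choose (ν - U.card)
        = ((Finset.univ \ U).powersetCard (ν - U.card)).card from ?_]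
    · refine Finset.card_bij' (fun T _ => T \ U) (fun V _ => V ∪ U) ?_ ?_ ?_ ?_
      · intro T hT
        rw [Finset.mem_filter, Finset.mem_powersetCard] at hT
        rw [Finset.mem_powersetCard]
        exact ⟨Finset.sdiff_subset_sdiff (Finset.subset_univ T) le_rfl,
          by rw [Finset.card_sdiff_of_subset hT.2, hT.1.2]⟩
      · intro V hV
        rw [Finset.mem_powersetCard] at hV
        rw [Finset.mem_filter, Finset.mem_powersetCard]
        have hdisj : Disjoint V U := Finset.disjoint_left.mpr
          (fun a haV => (Finset.mem_sdiff.mp (hV.1 haV)).2)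
        refine ⟨⟨Finset.subset_univ _, ?_⟩, Finset.subset_union_right⟩
        rw [Finset.card_union_of_disjoint hdisj, hV.2]
        omega
      · intro T hT
        rw [Finset.mem_filter] at hT
        exact Finset.sdiff_union_of_subset hT.2
      · intro V hV
        rw [Finset.mem_powersetCard] at hV
        have hdisj : Disjoint V U := Finset.disjoint_left.mpr
          (fun a haV => (Finset.mem_sdiff.mp (hV.1 haV)).2)
        exact Finset.union_sdiff_cancel_right hdisj
    · rw [Finset.card_powersetCard, Finset.card_sdiff_of_subset (Finset.subset_univ U), Finset.card_univ,
        Fintype.card_fin]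
  · rw [Finset.card_eq_zero, Finset.filter_eq_empty_iff]
    intro T hT
    rw [Finset.mem_powersetCard] at hT
    intro hUT
    exact h (hT.2 ▸ Finset.card_le_card hUT)

private lemma choose_eq_indicator_sum {n ν : ℕ} (S : Finset (Fin n)) :
    ((S.card.choose ν : ℕ) : ℂ)
      = ∑ T ∈ Finset.powersetCard ν (Finset.univ : Finset (Fin n)),
          (if T ⊆ S then (1 : ℂ) else 0) := by
  rw [Finset.sum_boole]
  congr 1
  rw [show (Finset.powersetCard ν (Finset.univ : Finset (Fin n))).filter (fun T => T ⊆ S)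
      = Finset.powersetCard ν S from ?_]
  · rw [Finset.card_powersetCard]
  · ext T
    rw [Finset.mem_filter, Finset.mem_powersetCard, Finset.mem_powersetCard]
    constructor
    · rintro ⟨⟨-, h2⟩, h3⟩; exact ⟨h3, h2⟩
    · rintro ⟨h1, h2⟩; exact ⟨⟨Finset.subset_univ _, h2⟩, h1⟩

private lemma indicator_expand {ι : Type*} (T : Finset ι) (z : ι → Prop) :
    (if (∀ i ∈ T, ¬ z i) then (1 : ℂ) else 0)
      = ∑ U ∈ T.powerset, (-1 : ℂ) ^ U.card * (if ∀ i ∈ U, z i then 1 else 0) := by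
  classical
  have h1 : (if (∀ i ∈ T, ¬ z i) then (1 : ℂ) else 0)
      = ∏ i ∈ T, ((fun i => -(if z i then (1:ℂ) else 0)) i + 1) := by
    by_cases h : ∀ i ∈ T, ¬ z i
    · rw [if_pos h, Finset.prod_congr rfl (fun i hi => show _ = (1:ℂ) by
        simp [if_neg (h i hi)]), Finset.prod_const_one]
    · rw [if_neg h]
      push_neg at h
      obtain ⟨i, hiT, hi⟩ := h
      rw [eq_comm]
      refine Finset.prod_eq_zero hiT ?_
      simp [if_pos hi]
  rw [h1, Finset.prod_add]
  refine Finset.sum_congr rfl fun U hU => ?_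
  rw [Finset.prod_const_one, mul_one]
  by_cases h : ∀ i ∈ U, z i
  · rw [if_pos h, mul_one, Finset.prod_congr rfl (fun i hi => by rw [if_pos (h i hi)]),
      Finset.prod_const]
  · rw [if_neg h, mul_zero]
    push_neg at h
    obtain ⟨i, hiU, hi⟩ := h
    refine Finset.prod_eq_zero hiU ?_
    rw [if_neg hi]; ring

private lemma binom_alt (a m : ℕ) (h : m ≤ a) (Q : ℂ) :
    ∑ t ∈ Finset.range (m + 1),
        (a.choose t : ℂ) * (-1) ^ t * Q ^ (m - t) * ((a - t).choose (m - t) : ℂ)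
      = (a.choose m : ℂ) * (Q - 1) ^ m := by
  have key : ∀ t ∈ Finset.range (m + 1),
      (a.choose t : ℂ) * (-1) ^ t * Q ^ (m - t) * ((a - t).choose (m - t) : ℂ)
        = (a.choose m : ℂ) * ((-1) ^ t * Q ^ (m - t) * (m.choose t : ℂ)) := by
    intro t ht
    rw [Finset.mem_range, Nat.lt_succ_iff] at ht
    have : (a.choose t : ℂ) * ((a - t).choose (m - t) : ℂ)
        = (a.choose m : ℂ) * (m.choose t : ℂ) := by
      rw [← Nat.cast_mul, ← Nat.cast_mul, ← Nat.choose_mul (n := a) ht]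
    calc (a.choose t : ℂ) * (-1) ^ t * Q ^ (m - t) * ((a - t).choose (m - t) : ℂ)
        = ((a.choose t : ℂ) * ((a - t).choose (m - t) : ℂ)) * ((-1) ^ t * Q ^ (m - t)) := by ring
      _ = ((a.choose m : ℂ) * (m.choose t : ℂ)) * ((-1) ^ t * Q ^ (m - t)) := by rw [this]
      _ = (a.choose m : ℂ) * ((-1) ^ t * Q ^ (m - t) * (m.choose t : ℂ)) := by ring
  rw [Finset.sum_congr rfl key, ← Finset.mul_sum]
  have hpow : (Q - 1) ^ m
      = ∑ t ∈ Finset.range (m + 1), (-1 : ℂ) ^ t * Q ^ (m - t) * (m.choose t : ℂ) := by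
    rw [show Q - 1 = -1 + Q by ring, add_pow]
  rw [hpow]

end Aux3
section Aux4
open Finset
attribute [local instance] Classical.propDecidable

private lemma G_formula {n ν : ℕ} (hν : ν ≤ n) (Q : ℂ) (S : Finset (Fin n)) (hS : S ⊆ Finset.univ) :
    (∑ T ∈ Finset.powersetCard ν (Finset.univ : Finset (Fin n)), ∑ U ∈ T.powerset,
        (-1 : ℂ) ^ U.card * Q ^ (ν - U.card) * (if S ⊆ U then (1 : ℂ) else 0))
      = if S.card ≤ ν
        then (-1) ^ S.card * (Q - 1) ^ (ν - S.card) * ((n - S.card).choose (n - ν) : ℂ)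
        else 0 := by
  classical
  set f : Finset (Fin n) → ℂ := fun U =>
    (-1 : ℂ) ^ U.card * Q ^ (ν - U.card) * (if S ⊆ U then (1 : ℂ) else 0) with hf
  -- swap the two sums
  have swap : (∑ T ∈ Finset.powersetCard ν (Finset.univ : Finset (Fin n)),
        ∑ U ∈ T.powerset, f U)
      = ∑ U ∈ (Finset.univ : Finset (Fin n)).powerset,
          ∑ T ∈ (Finset.powersetCard ν (Finset.univ : Finset (Fin n))).filter
            (fun T => U ⊆ T), f U := by
    refine Finset.sum_comm' ?_
    intro T U
    rw [Finset.mem_powerset, Finset.mem_filter, Finset.mem_powerset]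
    constructor
    · rintro ⟨h1, h2⟩; exact ⟨⟨h1, h2⟩, Finset.subset_univ _⟩
    · rintro ⟨⟨h1, h2⟩, -⟩; exact ⟨h1, h2⟩
  rw [swap]
  -- inner sum is constant
  have step2 : ∀ U ∈ (Finset.univ : Finset (Fin n)).powerset,
      (∑ T ∈ (Finset.powersetCard ν (Finset.univ : Finset (Fin n))).filter
        (fun T => U ⊆ T), f U)
      = ((if U.card ≤ ν then (n - U.card).choose (ν - U.card) else 0 : ℕ) : ℂ) * f U := by
    intro U _
    rw [Finset.sum_const, count_supersets_s14 U, nsmul_eq_mul]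
  rw [Finset.sum_congr rfl step2]
  -- kill the indicator : restrict to U ⊇ S
  have step3 : (∑ U ∈ (Finset.univ : Finset (Fin n)).powerset,
        ((if U.card ≤ ν then (n - U.card).choose (ν - U.card) else 0 : ℕ) : ℂ) * f U)
      = ∑ U ∈ ((Finset.univ : Finset (Fin n)).powerset).filter (fun U => S ⊆ U),
          ((if U.card ≤ ν then (n - U.card).choose (ν - U.card) else 0 : ℕ) : ℂ)
            * ((-1 : ℂ) ^ U.card * Q ^ (ν - U.card)) := by
    rw [Finset.sum_filter]
    refine Finset.sum_congr rfl fun U _ => ?_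
    by_cases h : S ⊆ U
    · rw [if_pos h, hf]; simp [if_pos h]
    · rw [if_neg h, hf]; simp [if_neg h]
  rw [step3]
  -- reindex by V = U \ S
  have step4 : (∑ U ∈ ((Finset.univ : Finset (Fin n)).powerset).filter (fun U => S ⊆ U),
        ((if U.card ≤ ν then (n - U.card).choose (ν - U.card) else 0 : ℕ) : ℂ)
          * ((-1 : ℂ) ^ U.card * Q ^ (ν - U.card)))
      = ∑ V ∈ ((Finset.univ : Finset (Fin n)) \ S).powerset,
          ((if V.card + S.card ≤ ν
              then (n - (V.card + S.card)).choose (ν - (V.card + S.card)) else 0 : ℕ) : ℂ)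
            * ((-1 : ℂ) ^ (V.card + S.card) * Q ^ (ν - (V.card + S.card))) := by
    refine Finset.sum_nbij' (fun U => U \ S) (fun V => V ∪ S) ?_ ?_ ?_ ?_ ?_
    · intro U hU
      rw [Finset.mem_filter] at hU
      rw [Finset.mem_powerset]
      exact Finset.sdiff_subset_sdiff (Finset.subset_univ _) le_rfl
    · intro V hV
      rw [Finset.mem_powerset] at hV
      rw [Finset.mem_filter, Finset.mem_powerset]
      exact ⟨Finset.subset_univ _, Finset.subset_union_right⟩
    · intro U hU
      rw [Finset.mem_filter] at hU
      exact Finset.sdiff_union_of_subset hU.2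
    · intro V hV
      rw [Finset.mem_powerset] at hV
      have hdisj : Disjoint V S := Finset.disjoint_left.mpr
        (fun a haV => (Finset.mem_sdiff.mp (hV haV)).2)
      exact Finset.union_sdiff_cancel_right hdisj
    · intro U hU
      rw [Finset.mem_filter] at hU
      have hcard : (U \ S).card + S.card = U.card := by
        rw [Finset.card_sdiff_of_subset hU.2]
        have := Finset.card_le_card hU.2
        omega
      rw [hcard]
  rw [step4]
  -- group by cardinality
  have hcardT : ((Finset.univ : Finset (Fin n)) \ S).card = n - S.card := by
    rw [Finset.card_sdiff_of_subset hS, Finset.card_univ, Fintype.card_fin]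
  rw [Finset.sum_powerset]
  have step5 : ∀ t ∈ Finset.range (((Finset.univ : Finset (Fin n)) \ S).card + 1),
      (∑ V ∈ Finset.powersetCard t ((Finset.univ : Finset (Fin n)) \ S),
        ((if V.card + S.card ≤ ν
            then (n - (V.card + S.card)).choose (ν - (V.card + S.card)) else 0 : ℕ) : ℂ)
          * ((-1 : ℂ) ^ (V.card + S.card) * Q ^ (ν - (V.card + S.card))))
      = ((n - S.card).choose t : ℂ) *
          (((if t + S.card ≤ ν
              then (n - (t + S.card)).choose (ν - (t + S.card)) else 0 : ℕ) : ℂ)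
            * ((-1 : ℂ) ^ (t + S.card) * Q ^ (ν - (t + S.card)))) := by
    intro t _
    have hconst : ∀ V ∈ Finset.powersetCard t ((Finset.univ : Finset (Fin n)) \ S),
        ((if V.card + S.card ≤ ν
            then (n - (V.card + S.card)).choose (ν - (V.card + S.card)) else 0 : ℕ) : ℂ)
          * ((-1 : ℂ) ^ (V.card + S.card) * Q ^ (ν - (V.card + S.card)))
        = ((if t + S.card ≤ ν
            then (n - (t + S.card)).choose (ν - (t + S.card)) else 0 : ℕ) : ℂ)
          * ((-1 : ℂ) ^ (t + S.card) * Q ^ (ν - (t + S.card))) := by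
      intro V hV
      rw [(Finset.mem_powersetCard.mp hV).2]
    rw [Finset.sum_congr rfl hconst, Finset.sum_const, Finset.card_powersetCard, hcardT,
      nsmul_eq_mul]
  rw [Finset.sum_congr rfl step5, hcardT]
  -- now a pure single-variable computation
  set s₀ := S.card
  by_cases hs : s₀ ≤ ν
  · rw [if_pos hs]
    -- restrict the range to ν - s₀ + 1
    rw [← Finset.sum_subset (Finset.range_subset_range.mpr (by omega :
        ν - s₀ + 1 ≤ n - s₀ + 1)) ?zero]
    case zero =>
      intro t _ ht
      rw [Finset.mem_range, Nat.lt_succ_iff, not_le] at ht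
      rw [if_neg (by omega), Nat.cast_zero, zero_mul, mul_zero]
    have hterm : ∀ t ∈ Finset.range (ν - s₀ + 1),
        ((n - s₀).choose t : ℂ) *
          (((if t + s₀ ≤ ν
              then (n - (t + s₀)).choose (ν - (t + s₀)) else 0 : ℕ) : ℂ)
            * ((-1 : ℂ) ^ (t + s₀) * Q ^ (ν - (t + s₀))))
        = (-1 : ℂ) ^ s₀ * (((n - s₀).choose t : ℂ) * (-1) ^ t * Q ^ ((ν - s₀) - t)
            * (((n - s₀) - t).choose ((ν - s₀) - t) : ℂ)) := by
      intro t ht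
      rw [Finset.mem_range, Nat.lt_succ_iff] at ht
      rw [if_pos (by omega), show n - (t + s₀) = (n - s₀) - t by omega,
        show ν - (t + s₀) = (ν - s₀) - t by omega, pow_add]
      ring
    rw [Finset.sum_congr rfl hterm, ← Finset.mul_sum,
      binom_alt (n - s₀) (ν - s₀) (by omega) Q]
    rw [show (n - s₀).choose (n - ν) = (n - s₀).choose (ν - s₀) from ?_]
    · ring
    · rw [show n - ν = (n - s₀) - (ν - s₀) by omega]
      exact Nat.choose_symm (by omega)
  · rw [if_neg hs]
    refine Finset.sum_eq_zero fun t _ => ?_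
    rw [if_neg (by omega), Nat.cast_zero, zero_mul, mul_zero]

end Aux4
section Aux5
open Finset
attribute [local instance] Classical.propDecidable

private lemma main_complex {R : Type*} [CommRing R] [Fintype R] [Nontrivial R]
    (hR : IsChainRing R) {n : ℕ} (C : Submodule R (Fin n → R)) (ν : ℕ) (hν : ν ≤ n) :
    (∑ j ∈ Finset.range (n + 1), (j.choose ν : ℂ) * (weightDist C j : ℂ))
        * (Fintype.card R : ℂ) ^ ν
      = (Nat.card ↥C : ℂ) * ∑ j ∈ Finset.range (ν + 1), (-1) ^ j *
          ((n - j).choose (n - ν) : ℂ) * ((Fintype.card R : ℂ) - 1) ^ (ν - j)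
          * (weightDist (dualCode C) j : ℂ) := by
  classical
  obtain ⟨χ, hχ⟩ := exists_genChar hR
  set Q : ℂ := (Fintype.card R : ℂ) with hQ
  set pcν := Finset.powersetCard ν (Finset.univ : Finset (Fin n)) with hpcν
  have hWD : ∀ (D : Submodule R (Fin n → R)) (j : ℕ), (weightDist D j : ℂ)
      = ∑ c : Fin n → R, (if c ∈ D ∧ wt c = j then (1 : ℂ) else 0) := by
    intro D j
    have h0 : weightDist D j = Nat.card {c : Fin n → R // c ∈ D ∧ wt c = j} := rfl
    rw [h0, Nat.card_eq_fintype_card, Fintype.card_subtype, Finset.sum_boole]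
  -- Step A
  have hA : (∑ j ∈ Finset.range (n + 1), (j.choose ν : ℂ) * (weightDist C j : ℂ))
      = ∑ c : Fin n → R, (if c ∈ C then (1 : ℂ) else 0) * (((wt c).choose ν : ℕ) : ℂ) := by
    simp_rw [hWD C, Finset.mul_sum]
    rw [Finset.sum_comm]
    refine Finset.sum_congr rfl fun c _ => ?_
    by_cases hc : c ∈ C
    · rw [if_pos hc, one_mul, Finset.sum_eq_single (wt c)]
      · rw [if_pos ⟨hc, rfl⟩, mul_one]
      · intro j _ hj
        rw [if_neg (by tauto), mul_zero]
      · intro hmem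
        exact absurd (Finset.mem_range.mpr (Nat.lt_succ_of_le (wt_le c))) hmem
    · rw [if_neg hc, zero_mul]
      refine Finset.sum_eq_zero fun j _ => ?_
      rw [if_neg (by tauto), mul_zero]
  -- Step B/C : binomial as an inclusion-exclusion double sum
  have hBC : ∀ c : Fin n → R, (((wt c).choose ν : ℕ) : ℂ)
      = ∑ T ∈ pcν, ∑ U ∈ T.powerset,
          (-1 : ℂ) ^ U.card * (if ∀ i ∈ U, c i = 0 then 1 else 0) := by
    intro c
    rw [wt_eq_card, choose_eq_indicator_sum]
    refine Finset.sum_congr rfl fun T _ => ?_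
    have hsub : (T ⊆ Finset.univ.filter (fun i => c i ≠ 0)) ↔ ∀ i ∈ T, ¬ (c i = 0) := by
      constructor
      · intro h i hi; exact (Finset.mem_filter.mp (h hi)).2
      · intro h i hi; exact Finset.mem_filter.mpr ⟨Finset.mem_univ i, h i hi⟩
    rw [if_congr hsub rfl rfl]
    convert indicator_expand T (fun i => c i = 0) using 2
    rename_i U _
    by_cases hP : ∀ i ∈ U, c i = 0 <;> simp [hP]
  calc (∑ j ∈ Finset.range (n + 1), (j.choose ν : ℂ) * (weightDist C j : ℂ)) * Q ^ ν
      = ∑ c : Fin n → R, ∑ T ∈ pcν, ∑ U ∈ T.powerset,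
          (-1 : ℂ) ^ U.card * Q ^ (ν - U.card) *
            ((if c ∈ C ∧ ∀ i ∈ U, c i = 0 then (1 : ℂ) else 0) * Q ^ U.card) := by
        rw [hA, Finset.sum_mul]
        refine Finset.sum_congr rfl fun c _ => ?_
        rw [hBC c, Finset.mul_sum, Finset.sum_mul]
        refine Finset.sum_congr rfl fun T hT => ?_
        rw [Finset.mul_sum, Finset.sum_mul]
        refine Finset.sum_congr rfl fun U hU => ?_
        have hUcard : U.card ≤ ν := by
          rw [hpcν] at hT
          have h1 := (Finset.mem_powersetCard.mp hT).2
          exact h1 ▸ Finset.card_le_card (Finset.mem_powerset.mp hU)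
        have hQpow : Q ^ (ν - U.card) * Q ^ U.card = Q ^ ν := by
          rw [← pow_add, Nat.sub_add_cancel hUcard]
        have hmerge : (if c ∈ C then (1 : ℂ) else 0) * (if ∀ i ∈ U, c i = 0 then (1 : ℂ) else 0)
            = if c ∈ C ∧ ∀ i ∈ U, c i = 0 then (1 : ℂ) else 0 := by
          by_cases hc : c ∈ C <;> by_cases hz : ∀ i ∈ U, c i = 0 <;>
            simp [hc, hz]
        rw [← hmerge, ← hQpow]
        ring
    _ = ∑ T ∈ pcν, ∑ U ∈ T.powerset,
          (-1 : ℂ) ^ U.card * Q ^ (ν - U.card) * ((Nat.card ↥C : ℂ) *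
            ∑ d : Fin n → R, (if d ∈ dualCode C ∧ ∀ i ∉ U, d i = 0 then (1 : ℂ) else 0)) := by
        rw [Finset.sum_comm]
        refine Finset.sum_congr rfl fun T _ => ?_
        rw [Finset.sum_comm]
        refine Finset.sum_congr rfl fun U _ => ?_
        rw [← duality_count χ hχ C U, ← Finset.mul_sum]
        congr 1
        rw [← Finset.sum_mul]
    _ = (Nat.card ↥C : ℂ) * ∑ d : Fin n → R, (if d ∈ dualCode C then (1 : ℂ) else 0) *
          (∑ T ∈ pcν, ∑ U ∈ T.powerset, (-1 : ℂ) ^ U.card * Q ^ (ν - U.card) *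
            (if Finset.univ.filter (fun i => d i ≠ 0) ⊆ U then (1 : ℂ) else 0)) := by
        rw [Finset.mul_sum]
        -- first pull the d-sum out on the left side
        have hsplit : ∀ (U : Finset (Fin n)) (d : Fin n → R),
            (if d ∈ dualCode C ∧ ∀ i ∉ U, d i = 0 then (1 : ℂ) else 0)
            = (if d ∈ dualCode C then (1 : ℂ) else 0) *
              (if Finset.univ.filter (fun i => d i ≠ 0) ⊆ U then (1 : ℂ) else 0) := by
          intro U d
          have hiff : (∀ i ∉ U, d i = 0) ↔ Finset.univ.filter (fun i => d i ≠ 0) ⊆ U := by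
            constructor
            · intro h i hi
              rw [Finset.mem_filter] at hi
              by_contra hiU
              exact hi.2 (h i hiU)
            · intro h i hiU
              by_contra hdi
              exact hiU (h (Finset.mem_filter.mpr ⟨Finset.mem_univ i, hdi⟩))
          by_cases h1 : d ∈ dualCode C <;> by_cases h2 : ∀ i ∉ U, d i = 0
          · rw [if_pos ⟨h1, h2⟩, if_pos h1, if_pos (hiff.mp h2), mul_one]
          · rw [if_neg (by tauto), if_pos h1, one_mul,
              if_neg (mt hiff.mpr h2)]
          · rw [if_neg (by tauto), if_neg h1, zero_mul]
          · rw [if_neg (by tauto), if_neg h1, zero_mul]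
        calc (∑ T ∈ pcν, ∑ U ∈ T.powerset,
              (-1 : ℂ) ^ U.card * Q ^ (ν - U.card) * ((Nat.card ↥C : ℂ) *
                ∑ d : Fin n → R, (if d ∈ dualCode C ∧ ∀ i ∉ U, d i = 0 then (1 : ℂ) else 0)))
            = ∑ d : Fin n → R, ∑ T ∈ pcν, ∑ U ∈ T.powerset,
                (Nat.card ↥C : ℂ) * ((if d ∈ dualCode C then (1 : ℂ) else 0) *
                  ((-1 : ℂ) ^ U.card * Q ^ (ν - U.card) *
                    (if Finset.univ.filter (fun i => d i ≠ 0) ⊆ U then (1 : ℂ) else 0))) := by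
              rw [Finset.sum_comm]
              refine Finset.sum_congr rfl fun T _ => ?_
              rw [Finset.sum_comm]
              refine Finset.sum_congr rfl fun U _ => ?_
              rw [Finset.mul_sum, Finset.mul_sum]
              refine Finset.sum_congr rfl fun d _ => ?_
              rw [hsplit U d]
              ring
          _ = ∑ d : Fin n → R, (Nat.card ↥C : ℂ) * ((if d ∈ dualCode C then (1 : ℂ) else 0) *
                (∑ T ∈ pcν, ∑ U ∈ T.powerset, (-1 : ℂ) ^ U.card * Q ^ (ν - U.card) *
                  (if Finset.univ.filter (fun i => d i ≠ 0) ⊆ U then (1 : ℂ) else 0))) := by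
              simp_rw [Finset.mul_sum]
    _ = (Nat.card ↥C : ℂ) * ∑ d : Fin n → R, (if d ∈ dualCode C then (1 : ℂ) else 0) *
          (if wt d ≤ ν then (-1 : ℂ) ^ (wt d) * (Q - 1) ^ (ν - wt d) *
            ((n - wt d).choose (n - ν) : ℂ) else 0) := by
        congr 1
        refine Finset.sum_congr rfl fun d _ => ?_
        congr 1
        rw [hpcν, G_formula hν Q (Finset.univ.filter (fun i => d i ≠ 0)) (Finset.filter_subset _ _),
          ← wt_eq_card d]
    _ = (Nat.card ↥C : ℂ) * ∑ j ∈ Finset.range (ν + 1), (-1) ^ j *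
          ((n - j).choose (n - ν) : ℂ) * (Q - 1) ^ (ν - j)
          * (weightDist (dualCode C) j : ℂ) := by
        congr 1
        simp_rw [hWD (dualCode C), Finset.mul_sum]
        rw [Finset.sum_comm]
        refine Finset.sum_congr rfl fun d _ => ?_
        by_cases hd : d ∈ dualCode C
        · rw [if_pos hd, one_mul]
          by_cases hwt : wt d ≤ ν
          · rw [if_pos hwt, Finset.sum_eq_single (wt d)]
            · rw [if_pos ⟨hd, rfl⟩, mul_one]
              ring
            · intro j _ hj
              rw [if_neg (by tauto), mul_zero]
            · intro hmem
              exact absurd (Finset.mem_range.mpr (Nat.lt_succ_of_le hwt)) hmem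
          · rw [if_neg hwt]
            refine (Finset.sum_eq_zero fun j hj => ?_).symm
            rw [Finset.mem_range, Nat.lt_succ_iff] at hj
            rw [if_neg (show ¬(d ∈ dualCode C ∧ wt d = j) from by
              rintro ⟨-, rfl⟩; exact hwt hj), mul_zero]
        · rw [if_neg hd, zero_mul]
          refine (Finset.sum_eq_zero fun j _ => ?_).symm
          rw [if_neg (by tauto), mul_zero]

end Aux5
section AuxFinal
open Finset

private lemma wt_zero_of_subsingleton {R : Type*} [Zero R] [Subsingleton R] {n : ℕ}
    (c : Fin n → R) : wt c = 0 := by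
  have : IsEmpty {i : Fin n // c i ≠ 0} := ⟨fun ⟨i, hi⟩ => hi (Subsingleton.elim _ _)⟩
  exact Nat.card_of_isEmpty

end AuxFinal

theorem stmt_14 {R : Type*} [CommRing R] [Fintype R] (hR : IsChainRing R)
    (p s : ℕ) (hcard : Nat.card R = p ^ s)
    {n : ℕ} (C : Submodule R (Fin n → R)) (ν : ℕ) (hν : ν ≤ n) :
    (∑ j ∈ Finset.range (n + 1), (j.choose ν : ℤ) * weightDist C j) * (p : ℤ) ^ (s * ν)
      = (Nat.card C : ℤ) *
        ∑ j ∈ Finset.range (ν + 1), (-1) ^ j * ((n - j).choose (n - ν) : ℤ) *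
          ((p : ℤ) ^ s - 1) ^ (ν - j) * weightDist (dualCode C) j := by
  rcases subsingleton_or_nontrivial R with hsub | hnt
  · -- the trivial ring
    have hps : p ^ s = 1 := by
      rw [← hcard, Nat.card_eq_fintype_card, Fintype.card_eq_one_iff]
      exact ⟨0, fun a => Subsingleton.elim a 0⟩
    have hps' : (p : ℤ) ^ s = 1 := by exact_mod_cast congrArg (Nat.cast : ℕ → ℤ) hps
    have hWD0 : ∀ D : Submodule R (Fin n → R), weightDist D 0 = 1 := by
      intro D
      rw [show weightDist D 0 = Nat.card {c : Fin n → R // c ∈ D ∧ wt c = 0} from rfl]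
      rw [Nat.card_eq_one_iff_unique]
      constructor
      · constructor
        intro a b
        ext i
        exact Subsingleton.elim _ _
      · exact ⟨⟨0, D.zero_mem, wt_zero_of_subsingleton 0⟩⟩
    have hWDj : ∀ (D : Submodule R (Fin n → R)) (j : ℕ), j ≠ 0 → weightDist D j = 0 := by
      intro D j hj
      rw [show weightDist D j = Nat.card {c : Fin n → R // c ∈ D ∧ wt c = j} from rfl]
      have : IsEmpty {c : Fin n → R // c ∈ D ∧ wt c = j} :=
        ⟨fun ⟨c, _, hc⟩ => hj (hc.symm.trans (wt_zero_of_subsingleton c))⟩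
      exact Nat.card_of_isEmpty
    have hC1 : Nat.card ↥C = 1 := by
      rw [Nat.card_eq_one_iff_unique]
      exact ⟨⟨fun a b => Subtype.ext (Subsingleton.elim _ _)⟩, ⟨⟨0, C.zero_mem⟩⟩⟩
    rw [show (p : ℤ) ^ (s * ν) = 1 by rw [pow_mul, hps', one_pow], hC1]
    rw [Finset.sum_eq_single 0 (fun j _ hj => by rw [hWDj C j hj]; ring)
      (fun h => absurd (Finset.mem_range.mpr (Nat.succ_pos n)) h)]
    rw [Finset.sum_eq_single 0 (fun j _ hj => by rw [hWDj (dualCode C) j hj]; ring)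
      (fun h => absurd (Finset.mem_range.mpr (Nat.succ_pos ν)) h)]
    rw [hWD0 C, hWD0 (dualCode C), hps']
    rcases Nat.eq_zero_or_pos ν with hν0 | hν0
    · subst hν0
      simp
    · rw [Nat.choose_eq_zero_of_lt (by omega : 0 < ν)]
      rw [show ((1 : ℤ) - 1) ^ (ν - 0) = 0 by
        rw [sub_self, zero_pow]; omega]
      ring
  · -- the main case
    have key := main_complex hR C ν hν
    have hq : (Fintype.card R : ℂ) = (p : ℂ) ^ s := by
      rw [← Nat.card_eq_fintype_card, hcard]
      push_cast
      ring
    rw [hq, ← pow_mul] at key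
    apply Int.cast_injective (α := ℂ)
    push_cast
    exact_mod_cast key
end

section
/- Let C be a linear code of length n over a finite chain ring with p^s elements, and let d^\perp be the minimum distance of its dual. Then for every 0 \le \nu < d^\perp, the weight distribution of C satisfies the Pless-type power moment identity \sum_{j=0}^{n} \binom{j}{\nu} A_j = (|C| / p^{s\nu}) \binom{n}{n-\nu} (p^s - 1)^{\nu}. -/
open Matrix Finset

section PlessAux

set_option linter.unusedSectionVars false

variable {R : Type*} [CommRing R] [Fintype R]

private lemma pm_ideal_principal (hR : IsChainRing R) (I : Ideal R) :
    ∃ b ∈ I, I = Ideal.span {b} := by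
  have hfin : Finite (Ideal R) := Finite.of_injective _ SetLike.coe_injective
  set S : Set (Ideal R) := {J | ∃ b ∈ I, J = Ideal.span {b}} with hS
  have hSne : S.Nonempty := ⟨Ideal.span {0}, 0, I.zero_mem, rfl⟩
  obtain ⟨J, hJS, hJmax⟩ := Set.Finite.exists_maximalFor id S (Set.toFinite S) hSne
  obtain ⟨b, hbI, rfl⟩ := hJS
  refine ⟨b, hbI, le_antisymm (fun y hy => ?_) ?_⟩
  · rcases hR (Ideal.span {y}) (Ideal.span {b}) with h | h
    · exact h (Ideal.subset_span rfl)
    · have := hJmax (j := Ideal.span {y}) ⟨y, hy, rfl⟩ h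
      simp only [id] at this
      exact this (Ideal.subset_span rfl)
  · rw [Ideal.span_le, Set.singleton_subset_iff]; exact hbI

private lemma pm_card_span_eq (a : R) :
    Nat.card (Ideal.span {a} : Ideal R) *
      Nat.card (LinearMap.ker (LinearMap.toSpanSingleton R R a)) = Nat.card R := by
  have h1 : Nat.card R = Nat.card (LinearMap.ker (LinearMap.toSpanSingleton R R a)) *
      Nat.card (R ⧸ LinearMap.ker (LinearMap.toSpanSingleton R R a)) :=
    Submodule.card_eq_card_quotient_mul_card _
  have h2 : Nat.card (R ⧸ LinearMap.ker (LinearMap.toSpanSingleton R R a)) =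
      Nat.card (LinearMap.range (LinearMap.toSpanSingleton R R a)) :=
    Nat.card_congr (LinearMap.quotKerEquivRange _).toEquiv
  rw [h1, h2, ← LinearMap.span_singleton_eq_range, Ideal.submodule_span_eq, mul_comm]

private lemma pm_mem_span_of_ann_le (hR : IsChainRing R) {a b : R}
    (h : ∀ r : R, r * b = 0 → r * a = 0) : a ∈ Ideal.span {b} := by
  rcases hR (Ideal.span {a}) (Ideal.span {b}) with hle | hle
  · exact hle (Ideal.subset_span rfl)
  · have hker : (LinearMap.ker (LinearMap.toSpanSingleton R R b) : Set R) ⊆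
        (LinearMap.ker (LinearMap.toSpanSingleton R R a) : Set R) := by
      intro r hr
      simp only [SetLike.mem_coe, LinearMap.mem_ker, LinearMap.toSpanSingleton_apply,
        smul_eq_mul] at *
      exact h r hr
    have hkcard : Nat.card (LinearMap.ker (LinearMap.toSpanSingleton R R b)) ≤
        Nat.card (LinearMap.ker (LinearMap.toSpanSingleton R R a)) :=
      Nat.card_mono (Set.toFinite _) hker
    have hca := pm_card_span_eq a
    have hcb := pm_card_span_eq b
    have hspan : Nat.card (Ideal.span {a} : Ideal R) ≤ Nat.card (Ideal.span {b} : Ideal R) := by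
      by_contra hlt
      push_neg at hlt
      have h2 := Nat.mul_lt_mul_of_lt_of_le hlt hkcard Nat.card_pos
      omega
    have hsub : (Ideal.span {b} : Set R) ⊆ (Ideal.span {a} : Set R) := hle
    have : (Ideal.span {b} : Set R) = (Ideal.span {a} : Set R) := by
      apply Set.eq_of_subset_of_ncard_le hsub
      rw [← Nat.card_coe_set_eq, ← Nat.card_coe_set_eq]
      exact hspan
    have : Ideal.span {a} = Ideal.span {b} := Ideal.ext fun x => by
      rw [← SetLike.mem_coe, ← SetLike.mem_coe, this]
    rw [← this]; exact Ideal.subset_span rfl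

private lemma pm_exists_ann (hR : IsChainRing R) [Nontrivial R] (I : Ideal R) (hI : I ≠ ⊤) :
    ∃ a : R, a ≠ 0 ∧ ∀ x ∈ I, a * x = 0 := by
  obtain ⟨b, hbI, rfl⟩ := pm_ideal_principal hR I
  by_cases hb : Function.Injective (fun r : R => r * b)
  · exfalso
    obtain ⟨r, hr⟩ := (Finite.injective_iff_surjective.mp hb) 1
    exact hI (Ideal.eq_top_of_isUnit_mem _ hbI
      (IsUnit.of_mul_eq_one (a := b) r (by rw [mul_comm]; exact hr)))
  · simp only [Function.Injective, not_forall] at hb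
    obtain ⟨r₁, r₂, h12, hne⟩ := hb
    refine ⟨r₁ - r₂, sub_ne_zero_of_ne hne, fun x hx => ?_⟩
    rw [Ideal.mem_span_singleton] at hx
    obtain ⟨c, rfl⟩ := hx
    have : (r₁ - r₂) * b = 0 := by rw [sub_mul, h12, sub_self]
    rw [show (r₁ - r₂) * (b * c) = ((r₁ - r₂) * b) * c by ring, this, zero_mul]

private lemma pm_chain_baer (hR : IsChainRing R) : Module.Baer R R := by
  intro I g
  obtain ⟨b, hbI, rfl⟩ := pm_ideal_principal hR I
  have hb : b ∈ Ideal.span {b} := Ideal.subset_span rfl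
  have hgb : g ⟨b, hb⟩ ∈ Ideal.span {b} := by
    apply pm_mem_span_of_ann_le hR
    intro r hr
    have : r • (⟨b, hb⟩ : Ideal.span ({b} : Set R)) = 0 := by
      ext; simpa [smul_eq_mul] using hr
    calc r * g ⟨b, hb⟩ = g (r • ⟨b, hb⟩) := by rw [_root_.map_smul]; rfl
    _ = 0 := by rw [this, _root_.map_zero]
  rw [Ideal.mem_span_singleton] at hgb
  obtain ⟨c, hc⟩ := hgb
  refine ⟨LinearMap.toSpanSingleton R R c, fun x hx => ?_⟩
  obtain ⟨r, hr⟩ := Ideal.mem_span_singleton.mp hx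
  have hx' : (⟨x, hx⟩ : Ideal.span ({b} : Set R)) = r • ⟨b, hb⟩ := by
    ext; simp [smul_eq_mul, hr, mul_comm]
  rw [hx', _root_.map_smul, LinearMap.toSpanSingleton_apply, hc, smul_eq_mul, smul_eq_mul, hr]
  ring

private lemma pm_exists_functional (hR : IsChainRing R) [Nontrivial R] {M : Type*}
    [AddCommGroup M] [Module R M] (N : Submodule R M) (hN : N ≠ ⊤) :
    ∃ f : M →ₗ[R] R, (∃ m, f m ≠ 0) ∧ ∀ x ∈ N, f x = 0 := by
  have : Nontrivial (M ⧸ N) := by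
    exact Submodule.Quotient.nontrivial_iff.mpr hN
  obtain ⟨x, hx⟩ := exists_ne (0 : M ⧸ N)
  set q := LinearMap.toSpanSingleton R (M ⧸ N) x with hq
  have hker : LinearMap.ker q ≠ ⊤ := by
    intro h
    have : (1 : R) ∈ LinearMap.ker q := h ▸ Submodule.mem_top
    rw [LinearMap.mem_ker, hq, LinearMap.toSpanSingleton_apply, one_smul] at this
    exact hx this
  obtain ⟨a, ha0, ha⟩ := pm_exists_ann hR (LinearMap.ker q) hker
  have hle : LinearMap.ker q ≤ LinearMap.ker (LinearMap.toSpanSingleton R R a) := by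
    intro r hr
    rw [LinearMap.mem_ker, LinearMap.toSpanSingleton_apply, smul_eq_mul, mul_comm]
    exact ha r hr
  set ψ : (R ⧸ LinearMap.ker q) →ₗ[R] R := Submodule.liftQ _ _ hle with hψ
  set i : (R ⧸ LinearMap.ker q) →ₗ[R] (M ⧸ N) :=
    (LinearMap.range q).subtype ∘ₗ (q.quotKerEquivRange).toLinearMap with hi
  have hinj : Function.Injective i := by
    rw [hi, LinearMap.coe_comp]
    exact Function.Injective.comp Subtype.val_injective (q.quotKerEquivRange).injective
  obtain ⟨h, hh⟩ := (pm_chain_baer hR).extension_property i hinj ψ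
  obtain ⟨m, hm⟩ := Submodule.mkQ_surjective N (i (Submodule.Quotient.mk 1))
  refine ⟨h ∘ₗ N.mkQ, ⟨m, ?_⟩, fun y hy => ?_⟩
  · have : h (i (Submodule.Quotient.mk 1)) = ψ (Submodule.Quotient.mk 1) :=
      DFunLike.congr_fun hh _
    simp only [LinearMap.comp_apply, Submodule.mkQ_apply]
    rw [show Submodule.Quotient.mk m = N.mkQ m from rfl, hm, this, hψ]
    rw [Submodule.liftQ_apply, LinearMap.toSpanSingleton_apply, one_smul]
    exact ha0
  · simp only [LinearMap.comp_apply, Submodule.mkQ_apply]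
    rw [(Submodule.Quotient.mk_eq_zero N).mpr hy, _root_.map_zero]

private lemma pm_wt_le {S : Type*} [Zero S] {n : ℕ} (v : Fin n → S) : wt v ≤ n := by
  have := Nat.card_le_card_of_injective (fun i : {i : Fin n // v i ≠ 0} => (i : Fin n))
    Subtype.val_injective
  simpa [Nat.card_eq_fintype_card, wt] using this

private lemma pm_proj_surj (hR : IsChainRing R) [Nontrivial R] {n : ℕ}
    (C : Submodule R (Fin n → R))
    (ν : ℕ) (hkey : ∀ v ∈ dualCode C, v ≠ 0 → ν < wt v)
    (T : Finset (Fin n)) (hT : T.card = ν) :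
    Submodule.map (LinearMap.funLeft R R (fun j : {i : Fin n // i ∈ T} => (j : Fin n))) C
      = ⊤ := by
  classical
  set P := LinearMap.funLeft R R (fun j : {i : Fin n // i ∈ T} => (j : Fin n)) with hP
  by_contra hM
  obtain ⟨f, ⟨m, hm⟩, hf0⟩ := pm_exists_functional hR _ hM
  set v : Fin n → R := fun i =>
    if h : i ∈ T then f (fun j => if (⟨i, h⟩ : {i : Fin n // i ∈ T}) = j then 1 else 0) else 0
    with hv
  have hvj : ∀ j : {i : Fin n // i ∈ T},
      v j = f (fun j' => if j = j' then 1 else 0) := by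
    intro j
    rw [hv]
    simp only [j.2, dif_pos]
  have hvmem : v ∈ dualCode C := by
    intro c hc
    have h1 : ∑ i : Fin n, v i * c i = ∑ i ∈ T, v i * c i := by
      refine (Finset.sum_subset (Finset.subset_univ T) (fun x _ hx => ?_)).symm
      rw [hv]; simp [hx]
    have h2 : ∑ i ∈ T, v i * c i = ∑ j : {i : Fin n // i ∈ T}, v j * c j :=
      (Finset.sum_coe_sort T fun i => v i * c i).symm
    have h3 : f (P c)
        = ∑ j : {i : Fin n // i ∈ T}, (P c) j • f (fun j' => if j = j' then 1 else 0) :=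
      LinearMap.pi_apply_eq_sum_univ f (P c)
    have h4 : f (P c) = 0 := hf0 _ (Submodule.mem_map_of_mem hc)
    have h5 : ∑ j : {i : Fin n // i ∈ T}, v j * c j
        = ∑ j : {i : Fin n // i ∈ T}, (P c) j • f (fun j' => if j = j' then 1 else 0) := by
      refine Finset.sum_congr rfl fun j _ => ?_
      rw [hvj j, smul_eq_mul, mul_comm]
      congr 1
    rw [h1, h2, h5, ← h3, h4]
  have hvne : v ≠ 0 := by
    have hmf : f m = ∑ j : {i : Fin n // i ∈ T}, m j • f (fun j' => if j = j' then 1 else 0) :=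
      LinearMap.pi_apply_eq_sum_univ f m
    intro hv0
    apply hm
    rw [hmf]
    refine Finset.sum_eq_zero fun j _ => ?_
    rw [← hvj j, hv0]
    simp
  have hwt : wt v ≤ ν := by
    have hsub : ∀ i : {i : Fin n // v i ≠ 0}, (i : Fin n) ∈ T := by
      intro ⟨i, hi⟩
      by_contra hiT
      exact hi (by rw [hv]; simp [hiT])
    have := Nat.card_le_card_of_injective
      (fun i : {i : Fin n // v i ≠ 0} => (⟨(i : Fin n), hsub i⟩ : {i : Fin n // i ∈ T}))
      (fun a b hab => Subtype.ext (by simpa using hab))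
    rw [wt, ← hT]
    simpa [Nat.card_eq_fintype_card] using this
  exact absurd (hkey v hvmem hvne) (by omega)

private lemma pm_card_pred {n : ℕ} (C : Submodule R (Fin n → R)) (T : Finset (Fin n))
    (hsurj : Submodule.map
      (LinearMap.funLeft R R (fun j : {i : Fin n // i ∈ T} => (j : Fin n))) C = ⊤)
    (pred : ({i : Fin n // i ∈ T} → R) → Prop) :
    Nat.card {c : Fin n → R // c ∈ C ∧
        pred (LinearMap.funLeft R R (fun j : {i : Fin n // i ∈ T} => (j : Fin n)) c)} =
      Nat.card {c : Fin n → R // c ∈ C ∧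
        LinearMap.funLeft R R (fun j : {i : Fin n // i ∈ T} => (j : Fin n)) c = 0} *
      Nat.card {w : {i : Fin n // i ∈ T} → R // pred w} := by
  classical
  set P := LinearMap.funLeft R R (fun j : {i : Fin n // i ∈ T} => (j : Fin n)) with hP
  have hsurj' : ∀ w : {i : Fin n // i ∈ T} → R, ∃ c, c ∈ C ∧ P c = w := by
    intro w
    have : w ∈ Submodule.map P C := hsurj ▸ Submodule.mem_top
    obtain ⟨c, hc, hcw⟩ := this
    exact ⟨c, hc, hcw⟩
  choose σ hσC hσP using hsurj'
  have e : {c : Fin n → R // c ∈ C ∧ pred (P c)} ≃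
      {c : Fin n → R // c ∈ C ∧ P c = 0} × {w : {i : Fin n // i ∈ T} → R // pred w} :=
    { toFun := fun c => (⟨c.1 - σ (P c.1), sub_mem c.2.1 (hσC _),
        by rw [_root_.map_sub, hσP, sub_self]⟩, ⟨P c.1, c.2.2⟩)
      invFun := fun kw => ⟨kw.1.1 + σ kw.2.1, add_mem kw.1.2.1 (hσC _),
        by rw [_root_.map_add, kw.1.2.2, zero_add, hσP]; exact kw.2.2⟩
      left_inv := fun c => Subtype.ext (by simp)
      right_inv := fun kw => by
        have hPk : P (kw.1.1 + σ kw.2.1) = kw.2.1 := by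
          rw [_root_.map_add, kw.1.2.2, zero_add, hσP]
        refine Prod.ext (Subtype.ext ?_) (Subtype.ext ?_)
        · show kw.1.1 + σ kw.2.1 - σ (P (kw.1.1 + σ kw.2.1)) = kw.1.1
          rw [hPk]; ring
        · exact hPk }
  rw [Nat.card_congr e, Nat.card_prod]

end PlessAux

theorem stmt_15 {R : Type*} [CommRing R] [Fintype R] (hR : IsChainRing R)
    (p s : ℕ) (hcard : Nat.card R = p ^ s)
    {n : ℕ} (C : Submodule R (Fin n → R)) (ν : ℕ)
    (hν : ν < minDist (dualCode C : Set (Fin n → R))) :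
    (∑ j ∈ Finset.range (n + 1), j.choose ν * weightDist C j) * p ^ (s * ν)
      = Nat.card C * n.choose (n - ν) * (p ^ s - 1) ^ ν := by
  classical
  rcases Set.eq_empty_or_nonempty {w | ∃ c ∈ (dualCode C : Set (Fin n → R)), c ≠ 0 ∧ wt c = w}
    with hset | hset
  · rw [minDist, hset, Nat.sInf_empty] at hν; omega
  have hd := Nat.sInf_mem hset
  obtain ⟨v₀, hv₀C, hv₀ne, hv₀wt⟩ := hd
  have hnontriv : Nontrivial R := by
    obtain ⟨i, hi⟩ := Function.ne_iff.mp hv₀ne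
    exact ⟨v₀ i, 0, hi⟩
  have hkey : ∀ v ∈ dualCode C, v ≠ 0 → ν < wt v := fun v hv hvne => by
    have : minDist (dualCode C : Set (Fin n → R)) ≤ wt v := Nat.sInf_le ⟨v, hv, hvne, rfl⟩
    omega
  have hνn : ν ≤ n := le_trans (le_of_lt (hkey v₀ hv₀C hv₀ne)) (pm_wt_le v₀)
  set Q := Fintype.card R with hQ
  have hQp : Q = p ^ s := by rw [hQ, ← Nat.card_eq_fintype_card, hcard]
  set F : Finset (Fin n → R) := Finset.univ.filter (· ∈ C) with hF
  set P : Finset (Finset (Fin n)) := Finset.univ.powersetCard ν with hPdef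
  set N : Finset (Fin n) → ℕ :=
    fun T => Nat.card {c : Fin n → R // c ∈ C ∧ ∀ i ∈ T, c i ≠ 0} with hN
  have stepA : ∀ T ∈ P, N T * Q ^ ν = Nat.card C * (Q - 1) ^ ν := by
    intro T hT
    have hTcard : T.card = ν := (Finset.mem_powersetCard.mp hT).2
    have hsurj := pm_proj_surj hR C ν hkey T hTcard
    set Pr := LinearMap.funLeft R R (fun j : {i : Fin n // i ∈ T} => (j : Fin n)) with hPr
    set K := Nat.card {c : Fin n → R // c ∈ C ∧ Pr c = 0} with hK
    have h1 := pm_card_pred C T hsurj (fun w => ∀ j, w j ≠ 0)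
    have h2 := pm_card_pred C T hsurj (fun _ => True)
    have h2l : Nat.card {c : Fin n → R // c ∈ C ∧ True} = Nat.card C := by
      exact Nat.card_congr (Equiv.subtypeEquivRight (fun c => by simp))
    have h2r : Nat.card {w : {i : Fin n // i ∈ T} → R // True} = Q ^ ν := by
      rw [Nat.card_congr (Equiv.subtypeUnivEquiv (fun w => trivial)),
        Nat.card_eq_fintype_card, Fintype.card_fun, Fintype.card_coe, hTcard]
    have h1l : Nat.card {c : Fin n → R // c ∈ C ∧ ∀ j : {i : Fin n // i ∈ T}, Pr c j ≠ 0}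
        = N T := by
      apply Nat.card_congr
      apply Equiv.subtypeEquivRight
      intro c
      constructor
      · rintro ⟨hc, h⟩
        exact ⟨hc, fun i hi => h ⟨i, hi⟩⟩
      · rintro ⟨hc, h⟩
        exact ⟨hc, fun j => h j j.2⟩
    have h1r : Nat.card {w : {i : Fin n // i ∈ T} → R // ∀ j, w j ≠ 0} = (Q - 1) ^ ν := by
      rw [Nat.card_congr (Equiv.subtypePiEquivPi (p := fun _ r => r ≠ 0)),
        Nat.card_eq_fintype_card, Fintype.card_pi]
      have : ∀ j : {i : Fin n // i ∈ T}, Fintype.card {r : R // r ≠ 0} = Q - 1 := by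
        intro j
        rw [Fintype.card_subtype_compl, Fintype.card_subtype_eq]
      rw [Finset.prod_congr rfl (fun j _ => this j), Finset.prod_const, Finset.card_univ,
        Fintype.card_coe, hTcard]
    rw [h2l, h2r] at h2
    rw [h1l, h1r] at h1
    calc N T * Q ^ ν = (K * Q ^ ν) * (Q - 1) ^ ν := by rw [h1]; ring
      _ = Nat.card C * (Q - 1) ^ ν := by rw [← h2]
  have hA : ∀ j, weightDist C j = (F.filter (fun c => wt c = j)).card := by
    intro j
    rw [weightDist, Nat.card_eq_fintype_card, Fintype.card_subtype, hF, Finset.filter_filter]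
  have hNT : ∀ T : Finset (Fin n), N T = (F.filter (fun c => ∀ i ∈ T, c i ≠ 0)).card := by
    intro T
    show Nat.card {c : Fin n → R // c ∈ C ∧ ∀ i ∈ T, c i ≠ 0} = _
    rw [Nat.card_eq_fintype_card, Fintype.card_subtype, hF, Finset.filter_filter]
  have hwt : ∀ c : Fin n → R, wt c = (Finset.univ.filter (fun i => c i ≠ 0)).card := by
    intro c; rw [wt, Nat.card_eq_fintype_card, Fintype.card_subtype]
  have key1 : ∑ j ∈ Finset.range (n+1), j.choose ν * weightDist C j
      = ∑ c ∈ F, (wt c).choose ν := by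
    rw [← Finset.sum_fiberwise_of_maps_to (g := wt) (t := Finset.range (n+1))
      (fun c _ => Finset.mem_range.mpr (Nat.lt_succ_of_le (pm_wt_le c)))
      (fun c => (wt c).choose ν)]
    refine Finset.sum_congr rfl fun j hj => ?_
    rw [hA j, Finset.sum_congr rfl (fun c hc => by rw [(Finset.mem_filter.mp hc).2]),
      Finset.sum_const, smul_eq_mul, mul_comm]
  have key2 : ∀ c : Fin n → R,
      (wt c).choose ν = (P.filter (fun T => ∀ i ∈ T, c i ≠ 0)).card := by
    intro c
    have hps : P.filter (fun T => ∀ i ∈ T, c i ≠ 0)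
        = (Finset.univ.filter (fun i => c i ≠ 0)).powersetCard ν := by
      ext T
      simp only [hPdef, Finset.mem_filter, Finset.mem_powersetCard, Finset.subset_iff,
        Finset.mem_univ, true_and]
      tauto
    rw [hps, Finset.card_powersetCard, ← hwt c]
  have key3 : ∑ c ∈ F, (P.filter (fun T => ∀ i ∈ T, c i ≠ 0)).card
      = ∑ T ∈ P, (F.filter (fun c => ∀ i ∈ T, c i ≠ 0)).card := by
    simp_rw [Finset.card_filter]
    exact Finset.sum_comm
  have hLHS : ∑ j ∈ Finset.range (n+1), j.choose ν * weightDist C j = ∑ T ∈ P, N T := by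
    rw [key1, Finset.sum_congr rfl (fun c _ => key2 c), key3]
    exact Finset.sum_congr rfl fun T _ => (hNT T).symm
  have hPcard : P.card = n.choose ν := by
    rw [hPdef, Finset.card_powersetCard, Finset.card_univ, Fintype.card_fin]
  have hchoose : n.choose (n - ν) = n.choose ν := Nat.choose_symm hνn
  calc (∑ j ∈ Finset.range (n+1), j.choose ν * weightDist C j) * p ^ (s * ν)
      = (∑ T ∈ P, N T) * Q ^ ν := by rw [hLHS, pow_mul, ← hQp]
    _ = ∑ T ∈ P, N T * Q ^ ν := Finset.sum_mul _ _ _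
    _ = ∑ T ∈ P, Nat.card C * (Q - 1) ^ ν := Finset.sum_congr rfl stepA
    _ = P.card * (Nat.card C * (Q - 1) ^ ν) := by rw [Finset.sum_const, smul_eq_mul]
    _ = Nat.card C * n.choose (n - ν) * (p ^ s - 1) ^ ν := by rw [hPcard, hchoose, hQp]; ring
end

section
/- Let C be an MDS code of length n, rank k, and minimum distance d = n - k + 1 over a finite chain ring with p^s elements. Then for every weight w with d \le w \le n, the number of codewords of weight w is A_w = \binom{n}{w} \sum_{j=0}^{w-d} (-1)^j \binom{w}{j} (p^{s(w-d+1-j)} - 1). -/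
open Matrix Finset

set_option maxHeartbeats 1000000

section Aux

open scoped Classical

private lemma neg_one_pow_sub {u v : ℕ} (h : u ≤ v) :
    (-1 : ℤ) ^ (v - u) = (-1) ^ v * (-1) ^ u := by
  have h2 : (-1 : ℤ) ^ (v - u) * (-1) ^ u = (-1) ^ v := by
    rw [← pow_add, Nat.sub_add_cancel h]
  have hu' : (-1 : ℤ) ^ u * (-1) ^ u = 1 := by
    rw [← pow_add]
    exact Even.neg_one_pow ⟨u, rfl⟩
  calc (-1 : ℤ) ^ (v - u) = (-1) ^ (v - u) * ((-1) ^ u * (-1) ^ u) := by rw [hu', mul_one]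
    _ = ((-1) ^ (v - u) * (-1) ^ u) * (-1) ^ u := by ring
    _ = (-1) ^ v * (-1) ^ u := by rw [h2]

private lemma alt_sum_powerset {α : Type*} (V : Finset α) :
    ∑ U ∈ V.powerset, (-1 : ℤ) ^ (V.card - U.card) = if V = ∅ then 1 else 0 := by
  have h : ∀ U ∈ V.powerset, (-1 : ℤ) ^ (V.card - U.card) = (-1) ^ V.card * (-1) ^ U.card := by
    intro U hU
    exact neg_one_pow_sub (card_le_card (mem_powerset.1 hU))
  rw [Finset.sum_congr rfl h, ← Finset.mul_sum, Finset.sum_powerset_neg_one_pow_card]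
  by_cases hV : V = ∅ <;> simp [hV]

private lemma inner_alt {α : Type*} (T S : Finset α) (hS : S ⊆ T) :
    ∑ T' ∈ T.powerset.filter (fun T' => S ⊆ T'), (-1 : ℤ) ^ (T.card - T'.card)
      = if S = T then 1 else 0 := by
  have hbij : ∑ T' ∈ T.powerset.filter (fun T' => S ⊆ T'), (-1 : ℤ) ^ (T.card - T'.card)
      = ∑ U ∈ (T \ S).powerset, (-1 : ℤ) ^ ((T \ S).card - U.card) := by
    apply Finset.sum_nbij' (i := fun T' => T' \ S) (j := fun U => S ∪ U)
    · intro T' hT'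
      rw [mem_filter, mem_powerset] at hT'
      exact mem_powerset.2 (sdiff_subset_sdiff hT'.1 le_rfl)
    · intro U hU
      rw [mem_powerset] at hU
      rw [mem_filter, mem_powerset]
      refine ⟨union_subset hS (hU.trans sdiff_subset), subset_union_left⟩
    · intro T' hT'
      rw [mem_filter] at hT'
      exact union_sdiff_of_subset hT'.2
    · intro U hU
      rw [mem_powerset] at hU
      have hdisj : Disjoint S U := disjoint_sdiff.mono_right hU
      exact union_sdiff_cancel_left hdisj
    · intro T' hT'
      rw [mem_filter, mem_powerset] at hT'
      congr 1
      have h1 : (T \ S).card = T.card - S.card := card_sdiff_of_subset hS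
      have h2 : (T' \ S).card = T'.card - S.card := card_sdiff_of_subset hT'.2
      have h3 : S.card ≤ T'.card := card_le_card hT'.2
      have h4 : T'.card ≤ T.card := card_le_card hT'.1
      omega
  rw [hbij, alt_sum_powerset]
  congr 1
  rw [sdiff_eq_empty_iff_subset]
  apply propext
  exact ⟨fun h => Finset.Subset.antisymm hS h, fun h => le_of_eq h.symm⟩

private lemma moebius_inv {α : Type*} (E : Finset α → ℤ) (T : Finset α) :
    ∑ T' ∈ T.powerset, (-1 : ℤ) ^ (T.card - T'.card) * ∑ S ∈ T'.powerset, E S = E T := by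
  calc ∑ T' ∈ T.powerset, (-1 : ℤ) ^ (T.card - T'.card) * ∑ S ∈ T'.powerset, E S
      = ∑ T' ∈ T.powerset, ∑ S ∈ T'.powerset, (-1 : ℤ) ^ (T.card - T'.card) * E S := by
        simp_rw [Finset.mul_sum]
    _ = ∑ S ∈ T.powerset, ∑ T' ∈ T.powerset.filter (fun T' => S ⊆ T'),
          (-1 : ℤ) ^ (T.card - T'.card) * E S := by
        apply Finset.sum_comm'
        intro T' S
        simp only [mem_powerset, mem_filter]
        constructor
        · rintro ⟨h1, h2⟩; exact ⟨⟨h1, h2⟩, h2.trans h1⟩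
        · rintro ⟨⟨h1, h2⟩, _⟩; exact ⟨h1, h2⟩
    _ = ∑ S ∈ T.powerset, (if S = T then (1:ℤ) else 0) * E S := by
        refine Finset.sum_congr rfl fun S hS => ?_
        rw [← Finset.sum_mul, inner_alt T S (mem_powerset.1 hS)]
    _ = E T := by
        rw [Finset.sum_eq_single T]
        · simp
        · intro S _ hne; simp [hne]
        · intro h; exact absurd (mem_powerset_self T) h


private noncomputable def supp {R : Type*} [Zero R] {n : ℕ} (v : Fin n → R) : Finset (Fin n) :=
  Finset.univ.filter (fun i => v i ≠ 0)

private lemma wt_eq_card_supp {R : Type*} [Zero R] {n : ℕ} (v : Fin n → R) :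
    wt v = (supp v).card := by
  rw [wt, Nat.card_eq_fintype_card, supp]
  simp [Fintype.card_subtype]

private lemma natCard_filter {α : Type*} [Fintype α] (P : α → Prop) [DecidablePred P] :
    Nat.card {x // P x} = (Finset.univ.filter P).card := by
  rw [Nat.card_eq_fintype_card, Fintype.card_subtype]

private lemma count_supp_subset {R : Type*} [CommRing R] [Fintype R] {n k : ℕ}
    (C : Submodule R (Fin n → R))
    (hC : Nat.card C = Fintype.card R ^ k) (hkn : k ≤ n)
    (hA : ∀ c ∈ C, c ≠ 0 → n - k + 1 ≤ wt c) (T : Finset (Fin n)) :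
    (Finset.univ.filter (fun c : Fin n → R => c ∈ C ∧ supp c ⊆ T)).card
      = Fintype.card R ^ (T.card + 1 - (n - k + 1)) := by
  have hTn : T.card ≤ n := by
    simpa using card_le_card (subset_univ T)
  by_cases hT : T.card ≤ n - k
  · -- small case : only the zero codeword
    have he : T.card + 1 - (n - k + 1) = 0 := by omega
    rw [he, pow_zero]
    rw [Finset.card_eq_one]
    refine ⟨0, ?_⟩
    ext c
    simp only [mem_filter, mem_univ, true_and, Finset.mem_singleton]
    constructor
    · rintro ⟨hc, hsupp⟩
      by_contra hne
      have := hA c hc hne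
      have h2 : wt c ≤ T.card := by
        rw [wt_eq_card_supp]
        exact card_le_card hsupp
      omega
    · rintro rfl
      refine ⟨C.zero_mem, ?_⟩
      intro i hi
      simp [supp] at hi
  · -- large case
    push_neg at hT
    obtain ⟨S, hTS, -, hSk⟩ := Finset.exists_subsuperset_card_eq (n := k)
      (Finset.subset_univ (univ \ T))
      (by rw [card_sdiff_of_subset (subset_univ T), card_univ, Fintype.card_fin]; omega)
      (by rw [card_univ, Fintype.card_fin]; exact hkn)
    -- restriction to S is bijective on C
    set q := Fintype.card R with hqdef
    set res : C → ({i // i ∈ S} → R) := fun c => (fun i => (c : Fin n → R) i.1) with hres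
    have hSc : (univ \ S).card = n - k := by
      rw [card_sdiff_of_subset (subset_univ S), card_univ, hSk]
      simp
    have hinj : Function.Injective res := by
      intro c₁ c₂ h
      have hv : (c₁ : Fin n → R) - (c₂ : Fin n → R) ∈ C := C.sub_mem c₁.2 c₂.2
      by_contra hne
      have hne' : (c₁ : Fin n → R) - (c₂ : Fin n → R) ≠ 0 := by
        intro h'
        exact hne (Subtype.ext (sub_eq_zero.1 h'))
      have hwt := hA _ hv hne'
      have hsub : supp ((c₁ : Fin n → R) - (c₂ : Fin n → R)) ⊆ univ \ S := by
        intro i hi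
        simp only [supp, mem_filter, mem_univ, true_and, Pi.sub_apply] at hi
        rw [Finset.mem_sdiff]
        refine ⟨mem_univ i, fun hiS => ?_⟩
        have := congrFun h ⟨i, hiS⟩
        simp only [hres] at this
        exact hi (by rw [this]; ring)
      have h2 : wt ((c₁ : Fin n → R) - (c₂ : Fin n → R)) ≤ n - k := by
        rw [wt_eq_card_supp, ← hSc]
        exact card_le_card hsub
      omega
    have hbij : Function.Bijective res := by
      rw [Nat.bijective_iff_injective_and_card]
      refine ⟨hinj, ?_⟩
      rw [hC, Nat.card_eq_fintype_card, Fintype.card_fun, Fintype.card_coe, hSk]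
    -- bijection between the two subtypes
    have hmemT : ∀ (c : Fin n → R), supp c ⊆ T ↔ ∀ i, c i ≠ 0 → i ∈ T := by
      intro c
      constructor
      · intro h i hi
        exact h (by simp [supp, hi])
      · intro h i hi
        simp only [supp, mem_filter, mem_univ, true_and] at hi
        exact h i hi
    set e : {c : Fin n → R // c ∈ C ∧ supp c ⊆ T} → {x : {i // i ∈ S} → R // ∀ i, x i ≠ 0 → i.1 ∈ T} := fun c => ⟨res ⟨c.1, c.2.1⟩, by
      intro i hi
      exact ((hmemT c.1).1 c.2.2) i.1 hi⟩ with hedef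
    have hebij : Function.Bijective e := by
      constructor
      · intro c₁ c₂ h
        have h1 : res ⟨c₁.1, c₁.2.1⟩ = res ⟨c₂.1, c₂.2.1⟩ := congrArg Subtype.val h
        have h2 := Subtype.ext_iff.1 (hinj h1)
        exact Subtype.ext h2
      · rintro ⟨x, hx⟩
        obtain ⟨c, hc⟩ := hbij.2 x
        have hcT : supp (c : Fin n → R) ⊆ T := by
          rw [hmemT]
          intro i hi
          by_contra hiT
          have hiS : i ∈ S := hTS (by simp [Finset.mem_sdiff, hiT])
          have : (c : Fin n → R) i = x ⟨i, hiS⟩ := by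
            rw [← hc]
          exact hiT (hx ⟨i, hiS⟩ (by rw [← this]; exact hi))
        exact ⟨⟨c.1, c.2, hcT⟩, Subtype.ext hc⟩
    have hcardAB : Nat.card {c : Fin n → R // c ∈ C ∧ supp c ⊆ T}
        = Nat.card {x : {i // i ∈ S} → R // ∀ i, x i ≠ 0 → i.1 ∈ T} :=
      Nat.card_eq_of_bijective e hebij
    -- card of B
    have hBcard : Nat.card {x : {i // i ∈ S} → R // ∀ i, x i ≠ 0 → i.1 ∈ T} = q ^ (S ∩ T).card := by
      have e2 : {x : {i // i ∈ S} → R // ∀ i, x i ≠ 0 → i.1 ∈ T} ≃ ({i : {i // i ∈ S} // i.1 ∈ T} → R) := by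
        refine ⟨fun x => fun i => x.1 i.1, fun y => ⟨fun i => if h : i.1 ∈ T then y ⟨i, h⟩ else 0,
          ?_⟩, ?_, ?_⟩
        · intro i hi
          by_contra hiT
          exact hi (dif_neg hiT)
        · intro x
          ext i
          by_cases h : i.1 ∈ T
          · exact dif_pos h
          · refine (dif_neg h).trans ?_
            by_contra hne
            exact h (x.2 i (fun h0 => hne h0.symm))
        · intro y
          ext i
          exact dif_pos i.2
      rw [Nat.card_congr e2, Nat.card_eq_fintype_card, Fintype.card_fun]
      congr 1
      rw [Fintype.card_congr ((Equiv.subtypeSubtypeEquivSubtypeInter _ _).trans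
        (Equiv.subtypeEquivRight (fun i => Finset.mem_inter.symm)))]
      exact Fintype.card_coe _
    have hST : (S ∩ T).card = T.card + 1 - (n - k + 1) := by
      have h1 : (S ∩ T).card + (S \ T).card = S.card := card_inter_add_card_sdiff S T
      have h2 : S \ T = univ \ T := by
        apply Finset.Subset.antisymm (sdiff_subset_sdiff (subset_univ S) le_rfl)
        intro i hi
        rw [Finset.mem_sdiff] at hi
        exact Finset.mem_sdiff.2 ⟨hTS (Finset.mem_sdiff.2 hi), hi.2⟩
      have h3 : (univ \ T).card = n - T.card := by
        rw [card_sdiff_of_subset (subset_univ T), card_univ]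
        simp
      rw [h2, h3, hSk] at h1
      clear_value e
      clear hedef hebij e hcardAB hBcard hmemT hbij hinj hres res
      omega
    rw [← natCard_filter (fun c : Fin n → R => c ∈ C ∧ supp c ⊆ T), hcardAB, hBcard, hST]

private lemma F_eq_sum_E {R : Type*} [CommRing R] [Fintype R] {n : ℕ}
    (C : Submodule R (Fin n → R)) (T : Finset (Fin n)) :
    (Finset.univ.filter (fun c : Fin n → R => c ∈ C ∧ supp c ⊆ T)).card
      = ∑ T' ∈ T.powerset,
          (Finset.univ.filter (fun c : Fin n → R => c ∈ C ∧ supp c = T')).card := by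
  rw [Finset.card_eq_sum_card_fiberwise (f := supp) (t := T.powerset)
    (fun c hc => Finset.mem_powerset.2 (Finset.mem_filter.1 hc).2.2)]
  apply Finset.sum_congr rfl
  intro T' hT'
  congr 1
  ext c
  simp only [Finset.mem_filter, Finset.mem_univ, true_and]
  constructor
  · rintro ⟨⟨h1, _⟩, h3⟩; exact ⟨h1, h3⟩
  · rintro ⟨h1, h2⟩; exact ⟨⟨h1, h2 ▸ Finset.mem_powerset.1 hT'⟩, h2⟩

private lemma Aw_eq_sum_E {R : Type*} [CommRing R] [Fintype R] {n : ℕ}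
    (C : Submodule R (Fin n → R)) (w : ℕ) :
    (Finset.univ.filter (fun c : Fin n → R => c ∈ C ∧ (supp c).card = w)).card
      = ∑ T ∈ Finset.powersetCard w (Finset.univ : Finset (Fin n)),
          (Finset.univ.filter (fun c : Fin n → R => c ∈ C ∧ supp c = T)).card := by
  rw [Finset.card_eq_sum_card_fiberwise (f := supp)
    (t := Finset.powersetCard w (Finset.univ : Finset (Fin n)))
    (fun c hc => Finset.mem_powersetCard.2 ⟨Finset.subset_univ _, (Finset.mem_filter.1 hc).2.2⟩)]
  apply Finset.sum_congr rfl
  intro T hT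
  congr 1
  ext c
  simp only [Finset.mem_filter, Finset.mem_univ, true_and]
  constructor
  · rintro ⟨⟨h1, _⟩, h3⟩; exact ⟨h1, h3⟩
  · rintro ⟨h1, h2⟩; exact ⟨⟨h1, h2 ▸ (Finset.mem_powersetCard.1 hT).2⟩, h2⟩

private lemma arith (q d w : ℕ) (hd : 1 ≤ d) (hdw : d ≤ w) :
    ∑ j ∈ Finset.range (w + 1), (w.choose j) • ((-1 : ℤ) ^ (w - j) * (q : ℤ) ^ (j + 1 - d)) =
    ∑ j ∈ Finset.range (w - d + 1),
      (-1 : ℤ) ^ j * (w.choose j : ℤ) * ((q : ℤ) ^ (w - d + 1 - j) - 1) := by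
  have h0 : ∀ j ∈ Finset.range (w + 1), (w.choose j) • ((-1 : ℤ) ^ (w - j) * (q : ℤ) ^ (j + 1 - d))
      = (fun j => (w.choose j : ℤ) * ((-1 : ℤ) ^ (w - j) * (q : ℤ) ^ (j + 1 - d))) j := by
    intro j _
    simp [nsmul_eq_mul]
  rw [Finset.sum_congr rfl h0, ← Finset.sum_range_reflect]
  have key : ∀ j ∈ Finset.range (w + 1),
      (fun j => (w.choose j : ℤ) * ((-1 : ℤ) ^ (w - j) * (q : ℤ) ^ (j + 1 - d))) (w + 1 - 1 - j)
      = (-1 : ℤ) ^ j * (w.choose j : ℤ) * ((q : ℤ) ^ (w - j + 1 - d) - 1)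
        + (-1 : ℤ) ^ j * (w.choose j : ℤ) := by
    intro j hj
    rw [Finset.mem_range] at hj
    have hjw : j ≤ w := by omega
    have e1 : w + 1 - 1 - j = w - j := by omega
    simp only [e1]
    rw [Nat.choose_symm hjw]
    have e2 : w - (w - j) = j := by omega
    rw [e2]
    ring
  rw [Finset.sum_congr rfl key, Finset.sum_add_distrib,
    Int.alternating_sum_range_choose_of_ne (by omega : w ≠ 0), add_zero]
  rw [← Finset.sum_subset (Finset.range_subset_range.2 (by omega : w - d + 1 ≤ w + 1))
    (by
      intro j hj hj2
      rw [Finset.mem_range] at hj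
      rw [Finset.mem_range, not_lt] at hj2
      have e : w - j + 1 - d = 0 := by omega
      rw [e, pow_zero]
      ring)]
  apply Finset.sum_congr rfl
  intro j hj
  rw [Finset.mem_range] at hj
  have e3 : w - j + 1 - d = w - d + 1 - j := by omega
  rw [e3]

end Aux


theorem stmt_16 {R : Type*} [CommRing R] [Fintype R] (hR : IsChainRing R)
    (p s : ℕ) (hcard : Nat.card R = p ^ s)
    {n k : ℕ} (C : Submodule R (Fin n → R)) (hfree : Nonempty (C ≃ₗ[R] (Fin k → R)))
    (hkn : k ≤ n) (hMDS : minDist (C : Set (Fin n → R)) = n - k + 1)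
    (w : ℕ) (hw1 : n - k + 1 ≤ w) (hw2 : w ≤ n) :
    (weightDist C w : ℤ) = (n.choose w : ℤ) *
      ∑ j ∈ Finset.range (w - (n - k + 1) + 1),
        (-1) ^ j * (w.choose j : ℤ) *
          ((p : ℤ) ^ (s * (w - (n - k + 1) + 1 - j)) - 1) := by
  classical
  have hw0 : w ≠ 0 := by omega
  have hA : ∀ c ∈ C, c ≠ 0 → n - k + 1 ≤ wt c := by
    intro c hc h0
    rw [← hMDS]
    exact Nat.sInf_le ⟨c, hc, h0, rfl⟩
  have hCcard : Nat.card C = Fintype.card R ^ k := by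
    obtain ⟨e⟩ := hfree
    rw [Nat.card_congr e.toEquiv, Nat.card_eq_fintype_card, Fintype.card_fun, Fintype.card_fin]
  have key := count_supp_subset C hCcard hkn hA
  have hq : (Fintype.card R : ℤ) = (p : ℤ) ^ s := by
    rw [← Nat.card_eq_fintype_card, hcard]
    push_cast
    ring
  have h0 : weightDist C w
      = (Finset.univ.filter (fun c : Fin n → R => c ∈ C ∧ (supp c).card = w)).card := by
    unfold weightDist
    rw [natCard_filter]
    congr 1
    ext c
    simp [wt_eq_card_supp]
  have h1 : (weightDist C w : ℤ) = ∑ T ∈ Finset.powersetCard w (Finset.univ : Finset (Fin n)),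
      ((Finset.univ.filter (fun c : Fin n → R => c ∈ C ∧ supp c = T)).card : ℤ) := by
    rw [h0, Aw_eq_sum_E C w]
    push_cast
    rfl
  have hE : ∀ T ∈ Finset.powersetCard w (Finset.univ : Finset (Fin n)),
      ((Finset.univ.filter (fun c : Fin n → R => c ∈ C ∧ supp c = T)).card : ℤ)
      = ∑ j ∈ Finset.range (w - (n - k + 1) + 1), (-1 : ℤ) ^ j * (w.choose j : ℤ) *
          ((Fintype.card R : ℤ) ^ (w - (n - k + 1) + 1 - j) - 1) := by
    intro T hT
    have hTw : T.card = w := (Finset.mem_powersetCard.1 hT).2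
    rw [← moebius_inv
      (fun T' => ((Finset.univ.filter (fun c : Fin n → R => c ∈ C ∧ supp c = T')).card : ℤ)) T]
    have hstep : ∀ T' ∈ T.powerset,
        (-1 : ℤ) ^ (T.card - T'.card) * ∑ S ∈ T'.powerset,
          ((Finset.univ.filter (fun c : Fin n → R => c ∈ C ∧ supp c = S)).card : ℤ)
        = (fun m => (-1 : ℤ) ^ (w - m) * (Fintype.card R : ℤ) ^ (m + 1 - (n - k + 1))) T'.card := by
      intro T' hT'
      simp only [hTw]
      congr 1
      rw [← Nat.cast_sum, ← F_eq_sum_E C T', key T']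
      push_cast
      ring
    rw [Finset.sum_congr rfl hstep]
    rw [Finset.sum_powerset_apply_card
      (fun m => (-1 : ℤ) ^ (w - m) * (Fintype.card R : ℤ) ^ (m + 1 - (n - k + 1)))]
    rw [hTw]
    rw [arith (Fintype.card R) (n - k + 1) w (by omega) hw1]
  rw [h1, Finset.sum_congr rfl hE, Finset.sum_const, Finset.card_powersetCard, Finset.card_univ,
    Fintype.card_fin, nsmul_eq_mul]
  congr 1
  apply Finset.sum_congr rfl
  intro j _
  rw [hq, ← pow_mul]
end

section
/- A linear code C over a finite chain ring is MDS if and only if it is both MDR and free. -/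
open Matrix Finset

section AuxLemmas

lemma wt_le_aux {R : Type*} [Zero R] {n : ℕ} (v : Fin n → R) : wt v ≤ n := by
  classical
  have h := Nat.card_le_card_of_injective
    (Subtype.val : {i : Fin n // v i ≠ 0} → Fin n) Subtype.val_injective
  simpa [wt] using h

lemma wt_pos_aux {R : Type*} [Zero R] {n : ℕ} {v : Fin n → R} (hv : v ≠ 0) : 0 < wt v := by
  have hex : ∃ i, v i ≠ 0 := by
    by_contra h
    push_neg at h
    exact hv (funext fun i => h i)
  obtain ⟨i, hi⟩ := hex
  have : Nonempty {i : Fin n // v i ≠ 0} := ⟨⟨i, hi⟩⟩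
  exact Nat.card_pos

lemma wt_le_of_zero_on {R : Type*} [Zero R] {n : ℕ} (v : Fin n → R) (T : Finset (Fin n))
    (h : ∀ i ∈ T, v i = 0) : wt v ≤ n - T.card := by
  classical
  have hinj : Function.Injective (fun i : {i : Fin n // v i ≠ 0} =>
      (⟨(i : Fin n), by
        simp only [Finset.mem_compl]
        intro hm
        exact i.2 (h _ hm)⟩ : {j : Fin n // j ∈ Tᶜ})) := by
    intro a b hab
    have h' : (a : Fin n) = b := by simpa using hab
    exact Subtype.ext h'
  have hle := Nat.card_le_card_of_injective _ hinj
  have hc : Nat.card {j : Fin n // j ∈ Tᶜ} = n - T.card := by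
    simp [Nat.card_eq_fintype_card, Finset.card_compl]
  rw [hc] at hle
  exact hle

lemma card_le_of_span_aux {R M : Type*} [CommRing R] [Fintype R] [AddCommGroup M] [Module R M]
    (C : Submodule R M) (S : Finset M) (hS : Submodule.span R (S : Set M) = C) :
    Nat.card C ≤ Nat.card R ^ S.card := by
  classical
  have h1 : Submodule.span R (Set.range (fun x : S => (x : M))) = C := by
    have : Set.range (fun x : S => (x : M)) = (S : Set M) := by ext y; simp
    rw [this]; exact hS
  have h2 := Fintype.range_linearCombination (R := R) (v := fun x : S => (x : M))
  calc Nat.card C ≤ Nat.card (S → R) := by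
        rw [← h1, ← h2]
        exact Nat.card_le_card_of_surjective _ (LinearMap.surjective_rangeRestrict _)
    _ = Nat.card R ^ S.card := by
        rw [Nat.card_pi, Finset.prod_const, Finset.card_univ, Fintype.card_coe]

lemma rankCode_eq_aux {R M : Type*} [CommRing R] [Fintype R] [Nontrivial R]
    [AddCommGroup M] [Module R M] {C : Submodule R M} {K : ℕ}
    (e : C ≃ₗ[R] (Fin K → R)) : rankCode C = K := by
  classical
  have hcardC : Nat.card C = Nat.card R ^ K := by
    rw [Nat.card_congr e.toEquiv, Nat.card_pi]
    simp
  have h2 : 1 < Nat.card R := Finite.one_lt_card_iff_nontrivial.mpr ‹Nontrivial R›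
  have hmem : K ∈ {k | ∃ S : Finset M, S.card = k ∧ Submodule.span R (S : Set M) = C} := by
    set v : Fin K → M := fun i => (e.symm (Pi.single i 1) : M) with hv
    have hinj : Function.Injective v := by
      intro a b hab
      have h1 : e.symm (Pi.single a 1) = e.symm (Pi.single b 1) := Subtype.ext hab
      have h2' : (Pi.single a 1 : Fin K → R) = Pi.single b 1 := e.symm.injective h1
      by_contra hne
      have h3 := congrFun h2' a
      simp [Pi.single_apply, hne] at h3
    refine ⟨Finset.univ.image v, ?_, ?_⟩
    · rw [Finset.card_image_of_injective _ hinj, Finset.card_univ, Fintype.card_fin]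
    · rw [Finset.coe_image, Finset.coe_univ, Set.image_univ]
      have hr : Set.range v
          = C.subtype '' Set.range (fun i : Fin K => e.symm (Pi.single i 1)) := by
        rw [← Set.range_comp]; rfl
      rw [hr, ← Submodule.map_span]
      have hspan : Submodule.span R
          (Set.range (fun i : Fin K => e.symm (Pi.single i 1))) = ⊤ := by
        have hr2 : Set.range (fun i : Fin K => e.symm (Pi.single i 1))
            = ⇑e.symm '' (Set.range fun i : Fin K => (Pi.single i 1 : Fin K → R)) := by
          rw [← Set.range_comp]; rfl
        rw [hr2, ← LinearEquiv.coe_coe e.symm, ← Submodule.map_span]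
        have hb : Submodule.span R
            (Set.range fun i : Fin K => (Pi.single i 1 : Fin K → R)) = ⊤ := by
          have hb0 := (Pi.basisFun R (Fin K)).span_eq
          have : Set.range ⇑(Pi.basisFun R (Fin K))
              = Set.range fun i : Fin K => (Pi.single i 1 : Fin K → R) := by
            ext y; constructor
            · rintro ⟨i, rfl⟩; exact ⟨i, (Pi.basisFun_apply R (Fin K) i).symm⟩
            · rintro ⟨i, rfl⟩; exact ⟨i, Pi.basisFun_apply R (Fin K) i⟩
          rwa [this] at hb0
        rw [hb, Submodule.map_top, LinearEquiv.range]
      rw [hspan, Submodule.map_top, Submodule.range_subtype]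
  refine le_antisymm (Nat.sInf_le hmem) (le_csInf ⟨K, hmem⟩ ?_)
  rintro m ⟨S, rfl, hSspan⟩
  have hle := card_le_of_span_aux C S hSspan
  rw [hcardC] at hle
  exact (Nat.pow_le_pow_iff_right h2).1 hle

end AuxLemmas

theorem stmt_19 {R : Type*} [CommRing R] [Fintype R] (hR : IsChainRing R)
    (p s : ℕ) (hcard : Nat.card R = p ^ s)
    {n : ℕ} (C : Submodule R (Fin n → R)) (hC : C ≠ ⊥) :
    Nat.card C = (p ^ s) ^ (n + 1 - minDist (C : Set (Fin n → R))) ↔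
    (minDist (C : Set (Fin n → R)) = n - rankCode C + 1 ∧
      Nonempty (C ≃ₗ[R] (Fin (rankCode C) → R))) := by
  classical
  have hnt : Nontrivial R := by
    rcases subsingleton_or_nontrivial R with h | h
    · haveI : Subsingleton (Fin n → R) := ⟨fun a b => funext fun i => Subsingleton.elim _ _⟩
      exact absurd (Subsingleton.elim C ⊥) hC
    · exact h
  have h2R : 1 < Nat.card R := Finite.one_lt_card_iff_nontrivial.mpr hnt
  set d := minDist (C : Set (Fin n → R)) with hd
  obtain ⟨x, hxC, hx0⟩ := (Submodule.ne_bot_iff C).1 hC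
  have hWne : {w | ∃ c ∈ (C : Set (Fin n → R)), c ≠ 0 ∧ wt c = w}.Nonempty :=
    ⟨wt x, x, hxC, hx0, rfl⟩
  have hdmem : ∃ c ∈ (C : Set (Fin n → R)), c ≠ 0 ∧ wt c = d := by
    rw [hd]; exact Nat.sInf_mem hWne
  obtain ⟨c0, hc0C, hc00, hc0w⟩ := hdmem
  have hd1 : 1 ≤ d := hc0w ▸ wt_pos_aux hc00
  have hdn : d ≤ n := hc0w ▸ wt_le_aux c0
  have hble : ∀ c ∈ C, c ≠ 0 → d ≤ wt c := by
    intro c hc h0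
    rw [hd]
    exact Nat.sInf_le ⟨c, hc, h0, rfl⟩
  constructor
  · intro hMDS
    obtain ⟨T, -, hTcard⟩ := Finset.exists_subset_card_eq
      (s := (Finset.univ : Finset (Fin n))) (n := n + 1 - d) (by simp; omega)
    set f : C →ₗ[R] (↥T → R) :=
      (LinearMap.funLeft R R (fun i : ↥T => (i : Fin n))).comp C.subtype with hf
    have hinj : Function.Injective f := by
      rw [injective_iff_map_eq_zero]
      intro c hcf
      by_contra hne
      have hc0 : (c : Fin n → R) ≠ 0 := fun h => hne (Subtype.ext h)
      have hzero : ∀ i ∈ T, (c : Fin n → R) i = 0 := by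
        intro i hi
        have := congrFun hcf ⟨i, hi⟩
        simpa [hf, LinearMap.funLeft] using this
      have hwt := wt_le_of_zero_on (c : Fin n → R) T hzero
      have hge := hble c c.2 hc0
      rw [hTcard] at hwt
      omega
    have hcardT : Nat.card (↥T → R) = (p ^ s) ^ (n + 1 - d) := by
      rw [Nat.card_pi, Finset.prod_const, hcard, Finset.card_univ, Fintype.card_coe, hTcard]
    have hbij : Function.Bijective f :=
      (Nat.bijective_iff_injective_and_card f).mpr ⟨hinj, by rw [hMDS, hcardT]⟩
    have hTfin : Fintype.card ↥T = n + 1 - d := by rw [Fintype.card_coe, hTcard]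
    let e : C ≃ₗ[R] (Fin (n + 1 - d) → R) :=
      (LinearEquiv.ofBijective f hbij).trans
        (LinearEquiv.funCongrLeft R R (Fintype.equivFinOfCardEq hTfin).symm)
    have hrank : rankCode C = n + 1 - d := rankCode_eq_aux e
    refine ⟨by rw [hrank]; omega, ?_⟩
    rw [hrank]
    exact ⟨e⟩
  · rintro ⟨hmdr, ⟨e⟩⟩
    set K := rankCode C with hK
    have hcardC : Nat.card C = Nat.card R ^ K := by
      rw [Nat.card_congr e.toEquiv, Nat.card_pi]
      simp
    have hle : Nat.card C ≤ Nat.card R ^ n := by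
      calc Nat.card C ≤ Nat.card (Fin n → R) :=
            Nat.card_le_card_of_injective _ Subtype.val_injective
        _ = Nat.card R ^ n := by rw [Nat.card_pi]; simp
    have hKn : K ≤ n := by
      rw [hcardC] at hle
      exact (Nat.pow_le_pow_iff_right h2R).1 hle
    rw [hcardC, ← hcard]
    congr 1
    omega
end
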